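/- arXiv:1004.0121 — 4 statements merged into one kernel-verified Lean document; each statement's English description precedes it below -/
import Mathlib

section
/- For functions f, g : (0,1] → ℝ with |f(r)| ≤ C₁ r^a (1-r)^{b-1} and |g(r)| ≤ C₂ r^c (1-r)^{d-1} on (0,1), where a, c ≥ 0, b, d > 0, and a ≠ c, the Mellin convolution (f*g)(r) = ∫_r^1 f(r/t) g(t) dt/t satisfies |(f*g)(r)| ≤ C r^{min(a,c)} (1-r)^{b+d-1} for some constant C and all r ∈ (0,1). -/
open MeasureTheory Set Real

lemma rpow_le_max' (x lo hi s : ℝ) (hlo : 0 < lo) (h1 : lo ≤ x) (h2 : x ≤ hi) :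
    x ^ s ≤ max (lo ^ s) (hi ^ s) := by
  rcases le_or_gt 0 s with hs | hs
  · exact le_max_of_le_right (Real.rpow_le_rpow (by linarith) h2 hs)
  · exact le_max_of_le_left (Real.rpow_le_rpow_of_nonpos hlo h1 hs.le)

lemma ii_left (b p q : ℝ) (hb : 0 < b) :
    IntegrableOn (fun t => (t - p) ^ (b - 1)) (Ioc p q) := by
  have h : IntervalIntegrable (fun x : ℝ => x ^ (b - 1)) volume (p - p) (q - p) :=
    intervalIntegral.intervalIntegrable_rpow' (by linarith)
  have h2 := h.comp_sub_right p
  simp only [sub_add_cancel] at h2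
  rcases le_or_gt p q with hpq | hpq
  · exact (intervalIntegrable_iff_integrableOn_Ioc_of_le hpq).mp h2
  · simp [Ioc_eq_empty (not_lt.mpr hpq.le)]

lemma ii_right (d p q : ℝ) (hd : 0 < d) :
    IntegrableOn (fun t => (q - t) ^ (d - 1)) (Ioc p q) := by
  have h : IntervalIntegrable (fun x : ℝ => x ^ (d - 1)) volume (q - q) (q - p) :=
    intervalIntegral.intervalIntegrable_rpow' (by linarith)
  have h2 := (h.comp_sub_left q)
  simp only [sub_sub_cancel, sub_self, sub_zero] at h2
  replace h2 := h2.symm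
  rcases le_or_gt p q with hpq | hpq
  · exact (intervalIntegrable_iff_integrableOn_Ioc_of_le hpq).mp h2
  · simp [Ioc_eq_empty (not_lt.mpr hpq.le)]

lemma int_left (b p q : ℝ) (hb : 0 < b) (hpq : p ≤ q) :
    ∫ t in Ioc p q, (t - p) ^ (b - 1) = (q - p) ^ b / b := by
  rw [← intervalIntegral.integral_of_le hpq,
    intervalIntegral.integral_comp_sub_right (fun x => x ^ (b - 1)) p, sub_self,
    integral_rpow (Or.inl (by linarith))]
  rw [Real.zero_rpow (by linarith : b - 1 + 1 ≠ 0)]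
  ring_nf

lemma int_right (d p q : ℝ) (hd : 0 < d) (hpq : p ≤ q) :
    ∫ t in Ioc p q, (q - t) ^ (d - 1) = (q - p) ^ d / d := by
  rw [← intervalIntegral.integral_of_le hpq,
    intervalIntegral.integral_comp_sub_left (fun x => x ^ (d - 1)) q, sub_self,
    integral_rpow (Or.inl (by linarith))]
  rw [Real.zero_rpow (by linarith : d - 1 + 1 ≠ 0)]
  ring_nf

section
variable (b d p q : ℝ)

lemma contOn_right (hpq : p < q) (s : ℝ) :
    ContinuousOn (fun t : ℝ => (q - t) ^ s) (Icc p ((p + q) / 2)) := by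
  apply ContinuousOn.rpow_const (by fun_prop)
  intro x hx
  left
  have := hx.2
  simp only [mem_Icc] at hx
  nlinarith [hx.1, hx.2]

lemma contOn_left (hpq : p < q) (s : ℝ) :
    ContinuousOn (fun t : ℝ => (t - p) ^ s) (Icc ((p + q) / 2) q) := by
  apply ContinuousOn.rpow_const (by fun_prop)
  intro x hx
  left
  simp only [mem_Icc] at hx
  nlinarith [hx.1, hx.2]

lemma L0 (hb : 0 < b) (hd : 0 < d) :
    IntegrableOn (fun t => (t - p) ^ (b - 1) * (q - t) ^ (d - 1)) (Ioc p q) := by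
  rcases le_or_gt q p with hpq | hpq
  · simp [Ioc_eq_empty (not_lt.mpr hpq)]
  set m := (p + q) / 2 with hm
  have hpm : p < m := by rw [hm]; linarith
  have hmq : m < q := by rw [hm]; linarith
  have h1 : IntegrableOn (fun t => (t - p) ^ (b - 1) * (q - t) ^ (d - 1)) (Ioc p m) := by
    refine MeasureTheory.IntegrableOn.mul_continuousOn_of_subset
      ((ii_left b p m hb)) (contOn_right p q hpq (d-1)) measurableSet_Ioc isCompact_Icc
      Ioc_subset_Icc_self
  have h2 : IntegrableOn (fun t => (t - p) ^ (b - 1) * (q - t) ^ (d - 1)) (Ioc m q) := by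
    refine MeasureTheory.IntegrableOn.continuousOn_mul_of_subset
      (contOn_left p q hpq (b-1)) ((ii_right d m q hd)) isCompact_Icc measurableSet_Ioc
      Ioc_subset_Icc_self
  have := h1.union h2
  rwa [Ioc_union_Ioc_eq_Ioc hpm.le hmq.le] at this
end
lemma two_rpow_abs_le (s : ℝ) : (2:ℝ) ^ s ≤ 2 ^ |s| :=
  Real.rpow_le_rpow_of_exponent_le one_le_two (le_abs_self s)

lemma one_le_two_rpow_abs (s : ℝ) : (1:ℝ) ≤ 2 ^ |s| :=
  Real.one_le_rpow one_le_two (abs_nonneg s)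

lemma window (x L s : ℝ) (hL : 0 < L) (h1 : L ≤ x) (h2 : x ≤ 2 * L) :
    x ^ s ≤ 2 ^ |s| * L ^ s := by
  have hLs : (0:ℝ) < L ^ s := Real.rpow_pos_of_pos hL s
  refine (rpow_le_max' x L (2*L) s hL h1 h2).trans (max_le ?_ ?_)
  · nlinarith [one_le_two_rpow_abs s]
  · rw [Real.mul_rpow (by norm_num) hL.le]
    nlinarith [two_rpow_abs_le s, Real.rpow_nonneg (by norm_num : (0:ℝ) ≤ 2) s]

lemma halfpow (x s : ℝ) (hx : 0 ≤ x) : (x / 2) ^ s ≤ 2 ^ |s| * x ^ s := by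
  rw [div_eq_mul_inv, Real.mul_rpow hx (by norm_num), mul_comm]
  have : ((2:ℝ)⁻¹) ^ s = 2 ^ (-s) := by
    rw [← Real.rpow_neg_one, ← Real.rpow_mul (by norm_num : (0:ℝ) ≤ 2)]
    norm_num
  rw [this]
  have h := Real.rpow_le_rpow_of_exponent_le one_le_two (neg_le_abs s)
  nlinarith [Real.rpow_nonneg hx s, Real.rpow_pos_of_pos (by norm_num : (0:ℝ)<2) (-s)]

/-- the constant in the beta-type bound -/
noncomputable def Kc (b d : ℝ) : ℝ := (2 ^ |d-1| / b + 2 ^ |b-1| / d) * 2 ^ |b+d-1|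

lemma Kc_nonneg (b d : ℝ) (hb : 0 < b) (hd : 0 < d) : 0 ≤ Kc b d := by
  unfold Kc
  have := Real.rpow_nonneg (by norm_num : (0:ℝ) ≤ 2) |d-1|
  have := Real.rpow_nonneg (by norm_num : (0:ℝ) ≤ 2) |b-1|
  have := Real.rpow_nonneg (by norm_num : (0:ℝ) ≤ 2) |b+d-1|
  positivity

lemma L1 (b d p q : ℝ) (hb : 0 < b) (hd : 0 < d) (hpq : p < q) :
    ∫ t in Ioc p q, (t - p) ^ (b - 1) * (q - t) ^ (d - 1)
      ≤ Kc b d * (q - p) ^ (b + d - 1) := by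
  set m := (p + q) / 2 with hm
  set L := (q - p) / 2 with hL
  have hLpos : 0 < L := by rw [hL]; linarith
  have hpm : p < m := by rw [hm]; linarith
  have hmq : m < q := by rw [hm]; linarith
  have h1 : IntegrableOn (fun t => (t - p) ^ (b - 1) * (q - t) ^ (d - 1)) (Ioc p m) :=
    MeasureTheory.IntegrableOn.mul_continuousOn_of_subset
      (ii_left b p m hb) (contOn_right p q hpq (d-1)) measurableSet_Ioc isCompact_Icc
      Ioc_subset_Icc_self
  have h2 : IntegrableOn (fun t => (t - p) ^ (b - 1) * (q - t) ^ (d - 1)) (Ioc m q) :=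
    MeasureTheory.IntegrableOn.continuousOn_mul_of_subset
      (contOn_left p q hpq (b-1)) (ii_right d m q hd) isCompact_Icc measurableSet_Ioc
      Ioc_subset_Icc_self
  have hsplit : ∫ t in Ioc p q, (t - p) ^ (b - 1) * (q - t) ^ (d - 1)
      = (∫ t in Ioc p m, (t - p) ^ (b - 1) * (q - t) ^ (d - 1))
        + ∫ t in Ioc m q, (t - p) ^ (b - 1) * (q - t) ^ (d - 1) := by
    rw [← MeasureTheory.setIntegral_union (Ioc_disjoint_Ioc_of_le le_rfl) measurableSet_Ioc h1 h2,
      Ioc_union_Ioc_eq_Ioc hpm.le hmq.le]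
  have half1 : ∫ t in Ioc p m, (t - p) ^ (b - 1) * (q - t) ^ (d - 1)
      ≤ 2 ^ |d-1| * L ^ (d-1) * (L ^ b / b) := by
    have hmono : ∫ t in Ioc p m, (t - p) ^ (b - 1) * (q - t) ^ (d - 1)
        ≤ ∫ t in Ioc p m, 2 ^ |d-1| * L ^ (d-1) * (t - p) ^ (b - 1) := by
      apply MeasureTheory.setIntegral_mono_on h1 ((ii_left b p m hb).const_mul _)
        measurableSet_Ioc
      intro t ht
      have h1t : L ≤ q - t := by simp only [mem_Ioc] at ht; rw [hL]; rw [hm] at ht; linarith [ht.2]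
      have h2t : q - t ≤ 2 * L := by simp only [mem_Ioc] at ht; rw [hL]; linarith [ht.1]
      have hw := window (q - t) L (d-1) hLpos h1t h2t
      have hbp : (0:ℝ) ≤ (t - p) ^ (b-1) := Real.rpow_nonneg (by simp only [mem_Ioc] at ht; linarith [ht.1]) _
      calc (t - p) ^ (b - 1) * (q - t) ^ (d - 1)
          ≤ (t - p) ^ (b - 1) * (2 ^ |d-1| * L ^ (d-1)) := by
            exact mul_le_mul_of_nonneg_left hw hbp
        _ = 2 ^ |d-1| * L ^ (d-1) * (t - p) ^ (b - 1) := by ring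
    rw [MeasureTheory.integral_const_mul, int_left b p m hb hpm.le] at hmono
    have : m - p = L := by rw [hm, hL]; ring
    rwa [this] at hmono
  have half2 : ∫ t in Ioc m q, (t - p) ^ (b - 1) * (q - t) ^ (d - 1)
      ≤ 2 ^ |b-1| * L ^ (b-1) * (L ^ d / d) := by
    have hmono : ∫ t in Ioc m q, (t - p) ^ (b - 1) * (q - t) ^ (d - 1)
        ≤ ∫ t in Ioc m q, 2 ^ |b-1| * L ^ (b-1) * (q - t) ^ (d - 1) := by
      apply MeasureTheory.setIntegral_mono_on h2 ((ii_right d m q hd).const_mul _)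
        measurableSet_Ioc
      intro t ht
      have h1t : L ≤ t - p := by simp only [mem_Ioc] at ht; rw [hL]; rw [hm] at ht; linarith [ht.1]
      have h2t : t - p ≤ 2 * L := by simp only [mem_Ioc] at ht; rw [hL]; linarith [ht.2]
      have hw := window (t - p) L (b-1) hLpos h1t h2t
      have hdp : (0:ℝ) ≤ (q - t) ^ (d-1) := Real.rpow_nonneg (by simp only [mem_Ioc] at ht; linarith [ht.2]) _
      calc (t - p) ^ (b - 1) * (q - t) ^ (d - 1)
          ≤ (2 ^ |b-1| * L ^ (b-1)) * (q - t) ^ (d - 1) := by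
            exact mul_le_mul_of_nonneg_right hw hdp
        _ = 2 ^ |b-1| * L ^ (b-1) * (q - t) ^ (d - 1) := by ring
    rw [MeasureTheory.integral_const_mul, int_right d m q hd hmq.le] at hmono
    have : q - m = L := by rw [hm, hL]; ring
    rwa [this] at hmono
  have hcollect1 : 2 ^ |d-1| * L ^ (d-1) * (L ^ b / b) = 2 ^ |d-1| / b * L ^ (b+d-1) := by
    rw [show b + d - 1 = (d-1) + b by ring, Real.rpow_add hLpos]
    ring
  have hcollect2 : 2 ^ |b-1| * L ^ (b-1) * (L ^ d / d) = 2 ^ |b-1| / d * L ^ (b+d-1) := by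
    rw [show b + d - 1 = (b-1) + d by ring, Real.rpow_add hLpos]
    ring
  have hLle : L ^ (b+d-1) ≤ 2 ^ |b+d-1| * (q-p) ^ (b+d-1) := by
    have := halfpow (q - p) (b+d-1) (by linarith)
    rwa [hL]
  have hc1 : (0:ℝ) ≤ 2 ^ |d-1| / b := by positivity
  have hc2 : (0:ℝ) ≤ 2 ^ |b-1| / d := by positivity
  calc ∫ t in Ioc p q, (t - p) ^ (b - 1) * (q - t) ^ (d - 1)
      ≤ 2 ^ |d-1| / b * L ^ (b+d-1) + 2 ^ |b-1| / d * L ^ (b+d-1) := by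
        rw [hsplit]; rw [hcollect1] at half1; rw [hcollect2] at half2; linarith
    _ = (2 ^ |d-1| / b + 2 ^ |b-1| / d) * L ^ (b+d-1) := by ring
    _ ≤ (2 ^ |d-1| / b + 2 ^ |b-1| / d) * (2 ^ |b+d-1| * (q-p) ^ (b+d-1)) := by
        apply mul_le_mul_of_nonneg_left hLle (by positivity)
    _ = Kc b d * (q - p) ^ (b + d - 1) := by unfold Kc; ring
lemma contOn_pow (e r u v : ℝ) (hr : 0 < r) (hru : r ≤ u) :
    ContinuousOn (fun t : ℝ => t ^ e) (Icc u v) := by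
  apply ContinuousOn.rpow_const (by fun_prop)
  intro x hx
  exact Or.inl (by simp only [mem_Icc] at hx; nlinarith [hx.1])

lemma intCore (e b d r : ℝ) (hb : 0 < b) (hd : 0 < d) (hr : 0 < r) :
    IntegrableOn (fun t => t ^ e * ((t - r) ^ (b-1) * (1 - t) ^ (d-1))) (Ioc r 1) :=
  MeasureTheory.IntegrableOn.continuousOn_mul_of_subset
    (contOn_pow e r r 1 hr le_rfl) (L0 b d r 1 hb hd) isCompact_Icc measurableSet_Ioc
    Ioc_subset_Icc_self

lemma lb34 (x s : ℝ) (hx : 3/4 ≤ x) (hx1 : x ≤ 1) : (3/4:ℝ) ^ |s| ≤ x ^ s := by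
  rcases le_or_gt 0 s with hs | hs
  · rw [abs_of_nonneg hs]; exact Real.rpow_le_rpow (by norm_num) hx hs
  · rw [abs_of_neg hs]
    calc (3/4:ℝ) ^ (-s) ≤ 1 := Real.rpow_le_one (by norm_num) (by norm_num) (by linarith)
      _ ≤ x ^ s := Real.one_le_rpow_of_pos_of_le_one_of_nonpos (by linarith) hx1 hs.le

set_option maxHeartbeats 2000000 in
lemma core (a b c d : ℝ) (hb : 0 < b) (hd : 0 < d) (hac : a ≠ c) :
    ∃ C₀ : ℝ, 0 ≤ C₀ ∧ ∀ r ∈ Ioo (0:ℝ) 1,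
      ∫ t in Ioc r 1, t ^ (c-a-b) * ((t - r) ^ (b-1) * (1 - t) ^ (d-1))
        ≤ C₀ * (r ^ (min a c - a) * (1-r) ^ (b+d-1)) := by
  set D1 := max ((1/2:ℝ) ^ (d-1)) 1 with hD1
  set B1 := max ((2:ℝ) ^ (1-b)) 1 with hB1
  set E2 := max ((1/2:ℝ) ^ (c-a-b)) 1 with hE2
  set B2 := max ((1/4:ℝ) ^ (b-1)) 1 with hB2
  have hD1p : (0:ℝ) < D1 := lt_of_lt_of_le one_pos (le_max_right _ _)
  have hB1p : (0:ℝ) < B1 := lt_of_lt_of_le one_pos (le_max_right _ _)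
  have hE2p : (0:ℝ) < E2 := lt_of_lt_of_le one_pos (le_max_right _ _)
  have hB2p : (0:ℝ) < B2 := lt_of_lt_of_le one_pos (le_max_right _ _)
  have habs : (0:ℝ) < |a - c| := abs_pos.mpr (sub_ne_zero.mpr hac)
  have hKbd := Kc_nonneg b d hb hd
  have hKad := Kc_nonneg |a-c| d habs hd
  set A : ℝ := D1/b + D1*B1*(2:ℝ)^(c-a)/|a-c| + E2*B2*(1/2:ℝ)^d/d with hA
  have hApos : 0 ≤ A := by
    have : (0:ℝ) < (2:ℝ)^(c-a) := Real.rpow_pos_of_pos (by norm_num) _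
    have : (0:ℝ) < (1/2:ℝ)^d := Real.rpow_pos_of_pos (by norm_num) _
    positivity
  set C₀ : ℝ := Kc b d + Kc |a-c| d + (1/4:ℝ)^(-b) * Kc b d + A * (4/3:ℝ)^|b+d-1| with hC₀
  have hC₀nonneg : 0 ≤ C₀ := by
    have h1 : (0:ℝ) < (1/4:ℝ)^(-b) := Real.rpow_pos_of_pos (by norm_num) _
    have h2 : (0:ℝ) < (4/3:ℝ)^|b+d-1| := Real.rpow_pos_of_pos (by norm_num) _
    positivity
  refine ⟨C₀, hC₀nonneg, ?_⟩
  rintro r ⟨hr0, hr1⟩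
  have hint := intCore (c-a-b) b d r hb hd hr0
  have h1rn : (0:ℝ) ≤ 1 - r := by linarith
  have hP1 : (0:ℝ) ≤ (1-r) ^ (b+d-1) := Real.rpow_nonneg h1rn _
  have hP2 : (0:ℝ) ≤ r ^ (c-a) := Real.rpow_nonneg hr0.le _
  have hP3 : (0:ℝ) ≤ r ^ (c-a) * (1-r) ^ (b+d-1) := mul_nonneg hP2 hP1
  have hXnn : (0:ℝ) ≤ r ^ (min a c - a) * (1-r) ^ (b+d-1) :=
    mul_nonneg (Real.rpow_nonneg hr0.le _) hP1
  rcases lt_or_gt_of_ne hac with hlt | hgt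
  · -- a < c
    have hmin : min a c - a = 0 := by rw [min_eq_left hlt.le]; ring
    have habs' : |a - c| = c - a := by rw [abs_of_neg (by linarith)]; ring
    rw [hmin, Real.rpow_zero]
    rcases le_or_gt 0 (c - a - b) with he | he
    · -- e ≥ 0
      have step : ∫ t in Ioc r 1, t ^ (c-a-b) * ((t - r) ^ (b-1) * (1 - t) ^ (d-1))
          ≤ Kc b d * (1-r) ^ (b+d-1) := by
        calc ∫ t in Ioc r 1, t ^ (c-a-b) * ((t - r) ^ (b-1) * (1 - t) ^ (d-1))
            ≤ ∫ t in Ioc r 1, (t - r) ^ (b-1) * (1 - t) ^ (d-1) := by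
              apply MeasureTheory.setIntegral_mono_on hint (L0 b d r 1 hb hd) measurableSet_Ioc
              intro t ht
              simp only [mem_Ioc] at ht
              have hXnn' : (0:ℝ) ≤ (t - r) ^ (b-1) * (1 - t) ^ (d-1) :=
                mul_nonneg (Real.rpow_nonneg (by linarith [ht.1]) _)
                  (Real.rpow_nonneg (by linarith [ht.2]) _)
              have hte : t ^ (c-a-b) ≤ 1 :=
                Real.rpow_le_one (by linarith [ht.1]) ht.2 he
              nlinarith
          _ ≤ Kc b d * (1-r) ^ (b+d-1) := L1 b d r 1 hb hd hr1
      calc _ ≤ Kc b d * (1-r) ^ (b+d-1) := step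
        _ ≤ C₀ * (1 * (1-r) ^ (b+d-1)) := by
            rw [one_mul]
            apply mul_le_mul_of_nonneg_right _ hP1
            rw [hC₀]
            have h1 : (0:ℝ) ≤ (1/4:ℝ)^(-b) * Kc b d := by positivity
            have h2 : (0:ℝ) ≤ A * (4/3:ℝ)^|b+d-1| := by positivity
            linarith
    · -- e < 0
      have step : ∫ t in Ioc r 1, t ^ (c-a-b) * ((t - r) ^ (b-1) * (1 - t) ^ (d-1))
          ≤ Kc (c-a) d * (1-r) ^ (b+d-1) := by
        have hca : (0:ℝ) < c - a := by linarith
        have h1rp : (0:ℝ) < 1 - r := by linarith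
        have hnn : (0:ℝ) ≤ (1-r) ^ (-(c-a-b)) := Real.rpow_nonneg h1rp.le _
        calc ∫ t in Ioc r 1, t ^ (c-a-b) * ((t - r) ^ (b-1) * (1 - t) ^ (d-1))
            ≤ ∫ t in Ioc r 1, (1-r) ^ (-(c-a-b)) * ((t - r) ^ (c-a-1) * (1 - t) ^ (d-1)) := by
              apply MeasureTheory.setIntegral_mono_on hint
                ((L0 (c-a) d r 1 hca hd).const_mul _) measurableSet_Ioc
              intro t ht
              simp only [mem_Ioc] at ht
              have htr : (0:ℝ) < t - r := by linarith [ht.1]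
              have hq : (t - r)/(1-r) ≤ t := by
                rw [div_le_iff₀ h1rp]; nlinarith [ht.2]
              have h1 : t ^ (c-a-b) ≤ ((t-r)/(1-r)) ^ (c-a-b) :=
                Real.rpow_le_rpow_of_nonpos (div_pos htr h1rp) hq he.le
              have h2 : ((t-r)/(1-r)) ^ (c-a-b) = (t-r) ^ (c-a-b) * (1-r) ^ (-(c-a-b)) := by
                rw [Real.div_rpow htr.le h1rp.le, Real.rpow_neg h1rp.le, div_eq_mul_inv]
              have h3 : (t-r) ^ (c-a-b) * (t-r) ^ (b-1) = (t-r) ^ (c-a-1) := by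
                rw [← Real.rpow_add htr]; congr 1; ring
              have hXnn' : (0:ℝ) ≤ (t - r) ^ (b-1) * (1 - t) ^ (d-1) :=
                mul_nonneg (Real.rpow_nonneg htr.le _) (Real.rpow_nonneg (by linarith [ht.2]) _)
              calc t ^ (c-a-b) * ((t - r) ^ (b-1) * (1 - t) ^ (d-1))
                  ≤ ((t-r) ^ (c-a-b) * (1-r) ^ (-(c-a-b))) * ((t - r) ^ (b-1) * (1 - t) ^ (d-1)) :=
                    mul_le_mul_of_nonneg_right (h1.trans_eq h2) hXnn'
                _ = (1-r) ^ (-(c-a-b)) * (((t-r) ^ (c-a-b) * (t-r) ^ (b-1)) * (1 - t) ^ (d-1)) := by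
                    ring
                _ = (1-r) ^ (-(c-a-b)) * ((t - r) ^ (c-a-1) * (1 - t) ^ (d-1)) := by rw [h3]
          _ = (1-r) ^ (-(c-a-b)) * ∫ t in Ioc r 1, (t - r) ^ (c-a-1) * (1 - t) ^ (d-1) :=
              MeasureTheory.integral_const_mul _ _
          _ ≤ (1-r) ^ (-(c-a-b)) * (Kc (c-a) d * (1-r) ^ (c-a+d-1)) :=
              mul_le_mul_of_nonneg_left (L1 (c-a) d r 1 hca hd hr1) hnn
          _ = Kc (c-a) d * ((1-r) ^ (-(c-a-b)) * (1-r) ^ (c-a+d-1)) := by ring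
          _ = Kc (c-a) d * (1-r) ^ (b+d-1) := by
              rw [← Real.rpow_add h1rp]; congr 2; ring
      calc _ ≤ Kc (c-a) d * (1-r) ^ (b+d-1) := step
        _ ≤ C₀ * (1 * (1-r) ^ (b+d-1)) := by
            rw [one_mul]
            apply mul_le_mul_of_nonneg_right _ hP1
            rw [hC₀, ← habs']
            have h1 : (0:ℝ) ≤ (1/4:ℝ)^(-b) * Kc b d := by positivity
            have h2 : (0:ℝ) ≤ A * (4/3:ℝ)^|b+d-1| := by positivity
            linarith
  · -- c < a
    have hmin : min a c - a = c - a := by rw [min_eq_right hgt.le]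
    have habs' : |a - c| = a - c := abs_of_pos (by linarith)
    rw [hmin]
    have hrca1 : (1:ℝ) ≤ r ^ (c-a) :=
      Real.one_le_rpow_of_pos_of_le_one_of_nonpos hr0 hr1.le (by linarith)
    rcases le_or_gt (1/4 : ℝ) r with hr4 | hr4
    · -- r ≥ 1/4
      have step : ∫ t in Ioc r 1, t ^ (c-a-b) * ((t - r) ^ (b-1) * (1 - t) ^ (d-1))
          ≤ ((1/4:ℝ)^(-b) * Kc b d) * (r ^ (c-a) * (1-r) ^ (b+d-1)) := by
        have hcoef : (0:ℝ) ≤ r ^ (c-a) * (1/4:ℝ)^(-b) :=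
          mul_nonneg hP2 (Real.rpow_nonneg (by norm_num) _)
        calc ∫ t in Ioc r 1, t ^ (c-a-b) * ((t - r) ^ (b-1) * (1 - t) ^ (d-1))
            ≤ ∫ t in Ioc r 1, (r ^ (c-a) * (1/4:ℝ)^(-b)) * ((t - r) ^ (b-1) * (1 - t) ^ (d-1)) := by
              apply MeasureTheory.setIntegral_mono_on hint
                ((L0 b d r 1 hb hd).const_mul _) measurableSet_Ioc
              intro t ht
              simp only [mem_Ioc] at ht
              have hXnn' : (0:ℝ) ≤ (t - r) ^ (b-1) * (1 - t) ^ (d-1) :=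
                mul_nonneg (Real.rpow_nonneg (by linarith [ht.1]) _)
                  (Real.rpow_nonneg (by linarith [ht.2]) _)
              have hte : t ^ (c-a-b) ≤ r ^ (c-a-b) :=
                Real.rpow_le_rpow_of_nonpos hr0 ht.1.le (by linarith)
              have hre : r ^ (c-a-b) = r ^ (c-a) * r ^ (-b) := by
                rw [← Real.rpow_add hr0]; congr 1; try ring
              have hrb : r ^ (-b) ≤ (1/4:ℝ)^(-b) :=
                Real.rpow_le_rpow_of_nonpos (by norm_num) hr4 (by linarith)
              have : t ^ (c-a-b) ≤ r ^ (c-a) * (1/4:ℝ)^(-b) := by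
                rw [hre] at hte
                exact hte.trans (mul_le_mul_of_nonneg_left hrb hP2)
              exact mul_le_mul_of_nonneg_right this hXnn'
          _ = (r ^ (c-a) * (1/4:ℝ)^(-b)) * ∫ t in Ioc r 1, (t - r) ^ (b-1) * (1 - t) ^ (d-1) :=
              MeasureTheory.integral_const_mul _ _
          _ ≤ (r ^ (c-a) * (1/4:ℝ)^(-b)) * (Kc b d * (1-r) ^ (b+d-1)) :=
              mul_le_mul_of_nonneg_left (L1 b d r 1 hb hd hr1) hcoef
          _ = ((1/4:ℝ)^(-b) * Kc b d) * (r ^ (c-a) * (1-r) ^ (b+d-1)) := by ring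
      calc _ ≤ ((1/4:ℝ)^(-b) * Kc b d) * (r ^ (c-a) * (1-r) ^ (b+d-1)) := step
        _ ≤ C₀ * (r ^ (c-a) * (1-r) ^ (b+d-1)) := by
            apply mul_le_mul_of_nonneg_right _ hP3
            rw [hC₀]
            have h2 : (0:ℝ) ≤ A * (4/3:ℝ)^|b+d-1| := by positivity
            linarith
    · -- r < 1/4
      have step : ∫ t in Ioc r 1, t ^ (c-a-b) * ((t - r) ^ (b-1) * (1 - t) ^ (d-1))
          ≤ A * r ^ (c-a) := by
        have h2r1 : 2*r ≤ 1 := by linarith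
        have h2rh : 2*r ≤ (1/2:ℝ) := by linarith
        have hsub1 : Ioc r (2*r) ⊆ Ioc r 1 := Ioc_subset_Ioc_right h2r1
        have hsub2 : Ioc (2*r) (1/2:ℝ) ⊆ Ioc r 1 := Ioc_subset_Ioc (by linarith) (by norm_num)
        have hsub3 : Ioc (1/2:ℝ) 1 ⊆ Ioc r 1 := Ioc_subset_Ioc_left (by linarith)
        have hsub23 : Ioc (2*r) (1:ℝ) ⊆ Ioc r 1 := Ioc_subset_Ioc_left (by linarith)
        have hi1 := hint.mono_set hsub1
        have hi2 := hint.mono_set hsub2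
        have hi3 := hint.mono_set hsub3
        have hi23 := hint.mono_set hsub23
        have hsplit : ∫ t in Ioc r 1, t ^ (c-a-b) * ((t - r) ^ (b-1) * (1 - t) ^ (d-1))
            = (∫ t in Ioc r (2*r), t ^ (c-a-b) * ((t - r) ^ (b-1) * (1 - t) ^ (d-1)))
              + ((∫ t in Ioc (2*r) (1/2:ℝ), t ^ (c-a-b) * ((t - r) ^ (b-1) * (1 - t) ^ (d-1)))
                + ∫ t in Ioc (1/2:ℝ) 1, t ^ (c-a-b) * ((t - r) ^ (b-1) * (1 - t) ^ (d-1))) := by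
          rw [show Ioc r (1:ℝ) = Ioc r (2*r) ∪ Ioc (2*r) 1 from
              (Ioc_union_Ioc_eq_Ioc (by linarith) h2r1).symm,
            MeasureTheory.setIntegral_union (Ioc_disjoint_Ioc_of_le le_rfl) measurableSet_Ioc hi1 hi23,
            show Ioc (2*r) (1:ℝ) = Ioc (2*r) (1/2:ℝ) ∪ Ioc (1/2:ℝ) 1 from
              (Ioc_union_Ioc_eq_Ioc h2rh (by norm_num)).symm,
            MeasureTheory.setIntegral_union (Ioc_disjoint_Ioc_of_le le_rfl) measurableSet_Ioc hi2 hi3]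
        have hI1 : ∫ t in Ioc r (2*r), t ^ (c-a-b) * ((t - r) ^ (b-1) * (1 - t) ^ (d-1))
            ≤ D1/b * r ^ (c-a) := by
          calc ∫ t in Ioc r (2*r), t ^ (c-a-b) * ((t - r) ^ (b-1) * (1 - t) ^ (d-1))
              ≤ ∫ t in Ioc r (2*r), (r ^ (c-a-b) * D1) * (t - r) ^ (b-1) := by
                apply MeasureTheory.setIntegral_mono_on hi1
                  ((ii_left b r (2*r) hb).const_mul _) measurableSet_Ioc
                intro t ht
                simp only [mem_Ioc] at ht
                have hte : t ^ (c-a-b) ≤ r ^ (c-a-b) :=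
                  Real.rpow_le_rpow_of_nonpos hr0 ht.1.le (by linarith)
                have h1t : (1-t) ^ (d-1) ≤ D1 := by
                  have := rpow_le_max' (1-t) (1/2) 1 (d-1) (by norm_num)
                    (by linarith [ht.2]) (by linarith [ht.1])
                  rwa [Real.one_rpow] at this
                have htrnn : (0:ℝ) ≤ (t-r) ^ (b-1) := Real.rpow_nonneg (by linarith [ht.1]) _
                have h1tnn : (0:ℝ) ≤ (1-t) ^ (d-1) := Real.rpow_nonneg (by linarith [ht.2]) _
                have hre_nn : (0:ℝ) ≤ r ^ (c-a-b) := Real.rpow_nonneg hr0.le _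
                calc t ^ (c-a-b) * ((t - r) ^ (b-1) * (1 - t) ^ (d-1))
                    ≤ r ^ (c-a-b) * ((t - r) ^ (b-1) * D1) :=
                      mul_le_mul hte (mul_le_mul_of_nonneg_left h1t htrnn)
                        (mul_nonneg htrnn h1tnn) hre_nn
                  _ = (r ^ (c-a-b) * D1) * (t - r) ^ (b-1) := by ring
            _ = (r ^ (c-a-b) * D1) * ∫ t in Ioc r (2*r), (t - r) ^ (b-1) :=
                MeasureTheory.integral_const_mul _ _
            _ = (r ^ (c-a-b) * D1) * ((2*r - r) ^ b / b) := by
                rw [int_left b r (2*r) hb (by linarith)]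
            _ = D1/b * (r ^ (c-a-b) * r ^ b) := by rw [show 2*r - r = r by ring]; ring
            _ = D1/b * r ^ (c-a) := by
                rw [← Real.rpow_add hr0, show c-a-b+b = c-a by ring]
        have hint2 : ∫ t in Ioc (2*r) (1/2:ℝ), t ^ (c-a-1)
            = ((1/2:ℝ) ^ (c-a) - (2*r) ^ (c-a))/(c-a) := by
          rw [← intervalIntegral.integral_of_le h2rh,
            integral_rpow (Or.inr ⟨by intro hh; apply hac; linarith,
              by intro hmem; rw [Set.uIcc_of_le h2rh, Set.mem_Icc] at hmem; linarith [hmem.1]⟩),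
            show c-a-1+1 = c-a by ring]
        have hbound2 : ((1/2:ℝ) ^ (c-a) - (2*r) ^ (c-a))/(c-a)
            ≤ (2:ℝ) ^ (c-a) * r ^ (c-a) / (a-c) := by
          have hhalf_nn : (0:ℝ) ≤ (1/2:ℝ) ^ (c-a) := Real.rpow_nonneg (by norm_num) _
          have heq : ((1/2:ℝ) ^ (c-a) - (2*r) ^ (c-a))/(c-a)
              = ((2*r) ^ (c-a) - (1/2:ℝ) ^ (c-a))/(a-c) := by
            rw [div_eq_div_iff (sub_ne_zero.mpr (Ne.symm hac)) (sub_ne_zero.mpr hac)]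
            ring
          rw [heq, Real.mul_rpow (by norm_num : (0:ℝ) ≤ 2) hr0.le]
          rw [div_le_div_iff₀ (by linarith) (by linarith)]
          nlinarith [hhalf_nn]
        have hI2 : ∫ t in Ioc (2*r) (1/2:ℝ), t ^ (c-a-b) * ((t - r) ^ (b-1) * (1 - t) ^ (d-1))
            ≤ (D1*B1*(2:ℝ)^(c-a)/(a-c)) * r ^ (c-a) := by
          have hRint : IntegrableOn (fun t : ℝ => (D1*B1) * t ^ (c-a-1)) (Ioc (2*r) (1/2:ℝ)) :=
            (((contOn_pow (c-a-1) (2*r) (2*r) (1/2:ℝ) (by linarith) le_rfl).integrableOn_Icc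
              ).mono_set Ioc_subset_Icc_self).const_mul _
          calc ∫ t in Ioc (2*r) (1/2:ℝ), t ^ (c-a-b) * ((t - r) ^ (b-1) * (1 - t) ^ (d-1))
              ≤ ∫ t in Ioc (2*r) (1/2:ℝ), (D1*B1) * t ^ (c-a-1) := by
                apply MeasureTheory.setIntegral_mono_on hi2 hRint measurableSet_Ioc
                intro t ht
                simp only [mem_Ioc] at ht
                have htpos : (0:ℝ) < t := by linarith [ht.1]
                have h1t : (1-t) ^ (d-1) ≤ D1 := by
                  have := rpow_le_max' (1-t) (1/2) 1 (d-1) (by norm_num)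
                    (by linarith [ht.2]) (by linarith [ht.1])
                  rwa [Real.one_rpow] at this
                have htb_nn : (0:ℝ) ≤ t ^ (b-1) := Real.rpow_nonneg htpos.le _
                have hmax := rpow_le_max' (t-r) (t/2) t (b-1) (by linarith)
                  (by linarith [ht.1]) (by linarith)
                have h2inv : ((2:ℝ)) ^ (1-b) = (((2:ℝ)) ^ (b-1))⁻¹ := by
                  rw [show (1:ℝ)-b = -(b-1) by ring, Real.rpow_neg (by norm_num : (0:ℝ) ≤ 2)]
                have hhalf : (t/2) ^ (b-1) = (2:ℝ) ^ (1-b) * t ^ (b-1) := by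
                  rw [Real.div_rpow htpos.le (by norm_num : (0:ℝ) ≤ 2), h2inv]
                  ring
                have h2 : (t-r) ^ (b-1) ≤ B1 * t ^ (b-1) := by
                  refine hmax.trans (max_le ?_ ?_)
                  · rw [hhalf]
                    exact mul_le_mul_of_nonneg_right (le_max_left _ _) htb_nn
                  · calc t ^ (b-1) = 1 * t ^ (b-1) := (one_mul _).symm
                      _ ≤ B1 * t ^ (b-1) :=
                        mul_le_mul_of_nonneg_right (le_max_right _ _) htb_nn
                have htrnn : (0:ℝ) ≤ (t-r) ^ (b-1) := Real.rpow_nonneg (by linarith [ht.1]) _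
                have h1tnn : (0:ℝ) ≤ (1-t) ^ (d-1) := Real.rpow_nonneg (by linarith [ht.2]) _
                have hte_nn : (0:ℝ) ≤ t ^ (c-a-b) := Real.rpow_nonneg htpos.le _
                calc t ^ (c-a-b) * ((t - r) ^ (b-1) * (1 - t) ^ (d-1))
                    ≤ t ^ (c-a-b) * ((B1 * t ^ (b-1)) * D1) := by
                      apply mul_le_mul_of_nonneg_left _ hte_nn
                      exact mul_le_mul h2 h1t h1tnn
                        (mul_nonneg hB1p.le htb_nn)
                  _ = (D1*B1) * (t ^ (c-a-b) * t ^ (b-1)) := by ring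
                  _ = (D1*B1) * t ^ (c-a-1) := by
                      rw [← Real.rpow_add htpos, show c-a-b+(b-1) = c-a-1 by ring]
            _ = (D1*B1) * ∫ t in Ioc (2*r) (1/2:ℝ), t ^ (c-a-1) :=
                MeasureTheory.integral_const_mul _ _
            _ ≤ (D1*B1) * ((2:ℝ)^(c-a) * r ^ (c-a) / (a-c)) := by
                rw [hint2]
                exact mul_le_mul_of_nonneg_left hbound2 (mul_nonneg hD1p.le hB1p.le)
            _ = (D1*B1*(2:ℝ)^(c-a)/(a-c)) * r ^ (c-a) := by ring
        have hI3 : ∫ t in Ioc (1/2:ℝ) 1, t ^ (c-a-b) * ((t - r) ^ (b-1) * (1 - t) ^ (d-1))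
            ≤ E2*B2*(1/2:ℝ)^d/d := by
          calc ∫ t in Ioc (1/2:ℝ) 1, t ^ (c-a-b) * ((t - r) ^ (b-1) * (1 - t) ^ (d-1))
              ≤ ∫ t in Ioc (1/2:ℝ) 1, (E2*B2) * (1 - t) ^ (d-1) := by
                apply MeasureTheory.setIntegral_mono_on hi3
                  ((ii_right d (1/2:ℝ) 1 hd).const_mul _) measurableSet_Ioc
                intro t ht
                simp only [mem_Ioc] at ht
                have hE : t ^ (c-a-b) ≤ E2 := by
                  have := rpow_le_max' t (1/2) 1 (c-a-b) (by norm_num) ht.1.le ht.2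
                  rwa [Real.one_rpow] at this
                have hB : (t-r) ^ (b-1) ≤ B2 := by
                  have := rpow_le_max' (t-r) (1/4) 1 (b-1) (by norm_num)
                    (by linarith [ht.1]) (by linarith [ht.2])
                  rwa [Real.one_rpow] at this
                have htrnn : (0:ℝ) ≤ (t-r) ^ (b-1) := Real.rpow_nonneg (by linarith [ht.1]) _
                have h1tnn : (0:ℝ) ≤ (1-t) ^ (d-1) := Real.rpow_nonneg (by linarith [ht.2]) _
                calc t ^ (c-a-b) * ((t - r) ^ (b-1) * (1 - t) ^ (d-1))
                    ≤ E2 * (B2 * (1 - t) ^ (d-1)) :=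
                      mul_le_mul hE (mul_le_mul_of_nonneg_right hB h1tnn)
                        (mul_nonneg htrnn h1tnn) hE2p.le
                  _ = (E2*B2) * (1 - t) ^ (d-1) := by ring
            _ = (E2*B2) * ∫ t in Ioc (1/2:ℝ) 1, (1 - t) ^ (d-1) :=
                MeasureTheory.integral_const_mul _ _
            _ = (E2*B2) * ((1/2:ℝ)^d/d) := by
                rw [int_right d (1/2:ℝ) 1 hd (by norm_num), show (1:ℝ) - 1/2 = 1/2 by norm_num]
            _ = E2*B2*(1/2:ℝ)^d/d := by ring
        have hAeq : A = D1/b + D1*B1*(2:ℝ)^(c-a)/(a-c) + E2*B2*(1/2:ℝ)^d/d := by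
          rw [hA, habs']
        have hI3' : E2*B2*(1/2:ℝ)^d/d ≤ (E2*B2*(1/2:ℝ)^d/d) * r ^ (c-a) := by
          apply le_mul_of_one_le_right _ hrca1
          have h12d : (0:ℝ) < (1/2:ℝ)^d := Real.rpow_pos_of_pos (by norm_num) _
          positivity
        calc ∫ t in Ioc r 1, t ^ (c-a-b) * ((t - r) ^ (b-1) * (1 - t) ^ (d-1))
            = _ := hsplit
          _ ≤ (D1/b) * r ^ (c-a) + ((D1*B1*(2:ℝ)^(c-a)/(a-c)) * r ^ (c-a)
              + (E2*B2*(1/2:ℝ)^d/d) * r ^ (c-a)) := by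
              linarith [hI1, hI2, hI3, hI3']
          _ = (D1/b + D1*B1*(2:ℝ)^(c-a)/(a-c) + E2*B2*(1/2:ℝ)^d/d) * r ^ (c-a) := by ring
          _ = A * r ^ (c-a) := by rw [hAeq]
      have h34 : (3/4:ℝ) ^ |b+d-1| ≤ (1-r) ^ (b+d-1) := lb34 _ _ (by linarith) (by linarith)
      have hstep2 : A * r ^ (c-a) ≤ (A * (4/3:ℝ)^|b+d-1|) * (r ^ (c-a) * (1-r) ^ (b+d-1)) := by
        have hprod : ((4/3:ℝ)^|b+d-1|) * ((3/4:ℝ)^|b+d-1|) = 1 := by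
          rw [← Real.mul_rpow (by norm_num) (by norm_num)]
          norm_num
        calc A * r ^ (c-a) = (A * (4/3:ℝ)^|b+d-1|) * (r ^ (c-a) * (3/4:ℝ)^|b+d-1|) := by
              rw [show (A * (4/3:ℝ)^|b+d-1|) * (r ^ (c-a) * (3/4:ℝ)^|b+d-1|)
                  = A * r ^ (c-a) * (((4/3:ℝ)^|b+d-1|) * ((3/4:ℝ)^|b+d-1|)) by ring, hprod,
                mul_one]
          _ ≤ (A * (4/3:ℝ)^|b+d-1|) * (r ^ (c-a) * (1-r) ^ (b+d-1)) := by
              apply mul_le_mul_of_nonneg_left _ (by positivity)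
              exact mul_le_mul_of_nonneg_left h34 hP2
      calc _ ≤ A * r ^ (c-a) := step
        _ ≤ (A * (4/3:ℝ)^|b+d-1|) * (r ^ (c-a) * (1-r) ^ (b+d-1)) := hstep2
        _ ≤ C₀ * (r ^ (c-a) * (1-r) ^ (b+d-1)) := by
            apply mul_le_mul_of_nonneg_right _ hP3
            rw [hC₀]
            have h1 : (0:ℝ) ≤ (1/4:ℝ)^(-b) * Kc b d := by positivity
            linarith
noncomputable def mellinConv (f g : ℝ → ℝ) (r : ℝ) : ℝ :=
  ∫ t in Set.Ioc r 1, f (r / t) * g t / t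

/-- Lemma A, case `a ≠ c`: the Mellin convolution of a function of type `(a,b)`
with a function of type `(c,d)` is of type `(min a c, b + d)`. -/
theorem mellinConv_type_of_ne (f g : ℝ → ℝ) (a b c d C₁ C₂ : ℝ)
    (ha : 0 ≤ a) (hc : 0 ≤ c) (hb : 0 < b) (hd : 0 < d) (hac : a ≠ c)
    (hf : ∀ r ∈ Set.Ioo (0:ℝ) 1, |f r| ≤ C₁ * r ^ a * (1 - r) ^ (b - 1))
    (hg : ∀ r ∈ Set.Ioo (0:ℝ) 1, |g r| ≤ C₂ * r ^ c * (1 - r) ^ (d - 1)) :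
    ∃ C : ℝ, ∀ r ∈ Set.Ioo (0:ℝ) 1,
      |mellinConv f g r| ≤ C * r ^ (min a c) * (1 - r) ^ (b + d - 1) := by
  obtain ⟨C₀, hC₀, hcore⟩ := core a b c d hb hd hac
  have hC₁ : 0 ≤ C₁ := by
    have h := (abs_nonneg (f (1/2))).trans (hf (1/2) ⟨by norm_num, by norm_num⟩)
    nlinarith [h, mul_pos (Real.rpow_pos_of_pos (show (0:ℝ) < 1/2 by norm_num) a)
      (Real.rpow_pos_of_pos (show (0:ℝ) < 1 - (1/2:ℝ) by norm_num) (b-1))]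
  have hC₂ : 0 ≤ C₂ := by
    have h := (abs_nonneg (g (1/2))).trans (hg (1/2) ⟨by norm_num, by norm_num⟩)
    nlinarith [h, mul_pos (Real.rpow_pos_of_pos (show (0:ℝ) < 1/2 by norm_num) c)
      (Real.rpow_pos_of_pos (show (0:ℝ) < 1 - (1/2:ℝ) by norm_num) (d-1))]
  refine ⟨C₁ * C₂ * C₀, ?_⟩
  rintro r ⟨hr0, hr1⟩
  have hint := intCore (c-a-b) b d r hb hd hr0
  have hintM : IntegrableOn
      (fun t => (C₁ * C₂ * r ^ a) * (t ^ (c-a-b) * ((t - r) ^ (b-1) * (1 - t) ^ (d-1))))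
      (Ioc r 1) := hint.const_mul _
  have hrann : (0:ℝ) ≤ C₁ * C₂ * r ^ a :=
    mul_nonneg (mul_nonneg hC₁ hC₂) (Real.rpow_nonneg hr0.le _)
  have h2 : (volume.restrict (Ioc r 1)) {(1:ℝ)} = 0 := by
    rw [Measure.restrict_apply (measurableSet_singleton 1)]
    exact measure_mono_null Set.inter_subset_left Real.volume_singleton
  have h2' : ∀ᵐ t ∂(volume.restrict (Ioc r 1)), t ≠ 1 := by
    rw [ae_iff]
    have hset : {t : ℝ | ¬ t ≠ 1} = {1} := by ext t; simp
    rw [hset]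
    exact h2
  have hae : ∀ᵐ t ∂(volume.restrict (Ioc r 1)), ‖f (r / t) * g t / t‖
      ≤ (C₁ * C₂ * r ^ a) * (t ^ (c-a-b) * ((t - r) ^ (b-1) * (1 - t) ^ (d-1))) := by
    filter_upwards [ae_restrict_mem measurableSet_Ioc, h2'] with t ht hne
    simp only [mem_Ioc] at ht
    have htpos : (0:ℝ) < t := lt_trans hr0 ht.1
    have htlt1 : t < 1 := lt_of_le_of_ne ht.2 hne
    have hft := hf (r/t) ⟨div_pos hr0 htpos, (div_lt_one htpos).mpr ht.1⟩
    have hgt := hg t ⟨htpos, htlt1⟩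
    have hfbnn : (0:ℝ) ≤ C₁ * (r/t) ^ a * (1 - r/t) ^ (b-1) := (abs_nonneg _).trans hft
    have hmul : |f (r/t)| * |g t| ≤ (C₁ * (r/t) ^ a * (1 - r/t) ^ (b-1))
        * (C₂ * t ^ c * (1 - t) ^ (d-1)) :=
      mul_le_mul hft hgt (abs_nonneg _) hfbnn
    have hnorm : ‖f (r/t) * g t / t‖ = |f (r/t)| * |g t| / t := by
      rw [Real.norm_eq_abs, abs_div, abs_mul, abs_of_pos htpos]
    rw [hnorm]
    have hstep : |f (r/t)| * |g t| / t ≤ (C₁ * (r/t) ^ a * (1 - r/t) ^ (b-1))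
        * (C₂ * t ^ c * (1 - t) ^ (d-1)) / t :=
      (div_le_div_iff_of_pos_right htpos).mpr hmul
    refine hstep.trans_eq ?_
    have htr0 : (0:ℝ) ≤ t - r := by linarith [ht.1]
    have h1rt : 1 - r/t = (t-r)/t := by field_simp
    rw [h1rt, Real.div_rpow hr0.le htpos.le, Real.div_rpow htr0 htpos.le]
    have e1 : t^(b-1) * t = t^(b-1+1) := by rw [Real.rpow_add htpos, Real.rpow_one]
    have e2 : t^a * t^(b-1+1) = t^(a+(b-1+1)) := (Real.rpow_add htpos _ _).symm
    have e3 : t^(c-a-b) * t^(a+(b-1+1)) = t^(c-a-b+(a+(b-1+1))) := (Real.rpow_add htpos _ _).symm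
    have e4 : c-a-b+(a+(b-1+1)) = c := by ring
    have hsplitpow : t ^ c = t^(c-a-b) * (t^a * (t^(b-1) * t)) := by
      rw [e1, e2, e3, e4]
    rw [hsplitpow]
    have hta : t^a ≠ 0 := (Real.rpow_pos_of_pos htpos a).ne'
    have htb : t^(b-1) ≠ 0 := (Real.rpow_pos_of_pos htpos (b-1)).ne'
    field_simp
  have hnormle := MeasureTheory.norm_integral_le_of_norm_le hintM hae
  have : |mellinConv f g r| ≤ ∫ t in Ioc r 1,
      (C₁ * C₂ * r ^ a) * (t ^ (c-a-b) * ((t - r) ^ (b-1) * (1 - t) ^ (d-1))) := by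
    rw [show |mellinConv f g r| = ‖∫ t in Set.Ioc r 1, f (r / t) * g t / t‖ from rfl]
    exact hnormle
  calc |mellinConv f g r|
      ≤ ∫ t in Ioc r 1, (C₁ * C₂ * r ^ a)
          * (t ^ (c-a-b) * ((t - r) ^ (b-1) * (1 - t) ^ (d-1))) := this
    _ = (C₁ * C₂ * r ^ a) * ∫ t in Ioc r 1,
          t ^ (c-a-b) * ((t - r) ^ (b-1) * (1 - t) ^ (d-1)) :=
        MeasureTheory.integral_const_mul _ _
    _ ≤ (C₁ * C₂ * r ^ a) * (C₀ * (r ^ (min a c - a) * (1-r) ^ (b+d-1))) :=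
        mul_le_mul_of_nonneg_left (hcore r ⟨hr0, hr1⟩) hrann
    _ = (C₁ * C₂ * C₀) * (r ^ a * r ^ (min a c - a)) * (1-r) ^ (b+d-1) := by ring
    _ = C₁ * C₂ * C₀ * r ^ (min a c) * (1 - r) ^ (b + d - 1) := by
        rw [← Real.rpow_add hr0, show a + (min a c - a) = min a c by ring]
end

section
/- For functions f, g : (0,1] → ℝ with |f(r)| ≤ C₁ r^a (1-r)^{b-1} and |g(r)| ≤ C₂ r^a (1-r)^{d-1} on (0,1), where a ≥ 0 and b, d > 0, the Mellin convolution satisfies |(f*g)(r)| ≤ C r^a (1-r)^{b+d-1} ln(e/r) for some constant C and all r ∈ (0,1). -/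
open MeasureTheory Set

lemma meas_rpow_base (c : ℝ) : Measurable (fun s : ℝ => s ^ c) := by measurability

lemma rpow_le_add_endpoints {u x v p : ℝ} (hu : 0 < u) (hux : u ≤ x) (hxv : x ≤ v) :
    x ^ p ≤ u ^ p + v ^ p := by
  rcases le_total p 0 with hp | hp
  · have h1 : x ^ p ≤ u ^ p := Real.rpow_le_rpow_of_nonpos hu hux hp
    have h2 : 0 ≤ v ^ p := Real.rpow_nonneg (by linarith) p
    linarith
  · have h1 : x ^ p ≤ v ^ p := Real.rpow_le_rpow (by linarith) hxv hp
    have h2 : 0 ≤ u ^ p := Real.rpow_nonneg hu.le p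
    linarith

lemma half_rpow (x p : ℝ) (hx : 0 ≤ x) : (x/2) ^ p = x ^ p * 2 ^ (-p) := by
  rw [div_eq_mul_inv, Real.mul_rpow hx (by norm_num), ← Real.rpow_neg_one (2:ℝ),
    ← Real.rpow_mul (by norm_num : (0:ℝ) ≤ 2)]
  norm_num

lemma two_rpow_mul_neg (p : ℝ) : (2:ℝ) ^ p * 2 ^ (-p) = 1 := by
  rw [← Real.rpow_add (by norm_num : (0:ℝ) < 2)]; simp

lemma one_le_two_rpow {p : ℝ} (hp : 0 ≤ p) : (1:ℝ) ≤ 2 ^ p := by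
  calc (1:ℝ) = 1 ^ p := (Real.one_rpow p).symm
  _ ≤ 2 ^ p := Real.rpow_le_rpow zero_le_one one_le_two hp

lemma half_rpow_neg_le {t p : ℝ} (hp : 0 ≤ p) (ht : 1/2 ≤ t) : t ^ (-p) ≤ (2:ℝ) ^ p := by
  have h : t ^ (-p) ≤ ((1:ℝ)/2) ^ (-p) :=
    Real.rpow_le_rpow_of_nonpos (by norm_num) ht (by linarith)
  rwa [one_div, Real.inv_rpow (by norm_num : (0:ℝ) ≤ 2),
    Real.rpow_neg (by norm_num : (0:ℝ) ≤ 2), inv_inv] at h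

lemma integrableOn_sub_rpow (r c e p : ℝ) (hp : -1 < p) :
    IntegrableOn (fun t : ℝ => (t - r) ^ p) (Ioc c e) := by
  rcases le_total c e with h | h
  · exact (intervalIntegrable_iff_integrableOn_Ioc_of_le h).mp
      (by simpa using
        (intervalIntegral.intervalIntegrable_rpow' (a := c - r) (b := e - r) hp).comp_sub_right r)
  · rw [Ioc_eq_empty (not_lt.mpr h)]; exact integrableOn_empty

lemma integral_sub_rpow (r c e p : ℝ) (hp : -1 < p) (hce : c ≤ e) :
    ∫ t in Ioc c e, (t - r) ^ p = ((e - r) ^ (p+1) - (c - r) ^ (p+1)) / (p+1) := by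
  rw [← intervalIntegral.integral_of_le hce,
    intervalIntegral.integral_comp_sub_right (fun x => x ^ p) r,
    integral_rpow (Or.inl hp)]

lemma integral_base_sub_rpow (r e p : ℝ) (hp : -1 < p) (hp' : p + 1 ≠ 0) (hre : r ≤ e) :
    ∫ t in Ioc r e, (t - r) ^ p = (e - r) ^ (p+1) / (p+1) := by
  rw [integral_sub_rpow r r e p hp hre, sub_self, Real.zero_rpow hp']
  ring

lemma integrableOn_one_sub_rpow (m p : ℝ) (hp : -1 < p) (hm : m ≤ 1) :
    IntegrableOn (fun t : ℝ => (1 - t) ^ p) (Ioc m 1) := by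
  refine (intervalIntegrable_iff_integrableOn_Ioc_of_le hm).mp ?_
  have h := (intervalIntegral.intervalIntegrable_rpow' (a := (0:ℝ)) (b := 1 - m) hp).comp_sub_left 1
  simpa using h.symm

lemma integral_one_sub_rpow (m p : ℝ) (hp : -1 < p) (hm : m ≤ 1) :
    ∫ t in Ioc m 1, (1 - t) ^ p = (1 - m) ^ (p+1) / (p+1) := by
  rw [← intervalIntegral.integral_of_le hm,
    intervalIntegral.integral_comp_sub_left (fun x => x ^ p) 1,
    integral_rpow (Or.inl hp)]
  simp [Real.zero_rpow (by linarith : p + 1 ≠ 0)]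

lemma integrableOn_of_le {f g : ℝ → ℝ} {s : Set ℝ} (hs : MeasurableSet s) (hmeas : Measurable f)
    (hg : IntegrableOn g s) (h0 : ∀ t ∈ s, 0 ≤ f t) (h : ∀ t ∈ s, f t ≤ g t) :
    IntegrableOn f s := by
  apply Integrable.mono hg hmeas.aestronglyMeasurable.restrict
  rw [ae_restrict_iff' hs]
  apply ae_of_all; intro t ht
  rw [Real.norm_eq_abs, Real.norm_eq_abs, abs_of_nonneg (h0 t ht)]
  exact (h t ht).trans (le_abs_self _)

lemma one_le_log_exp_div {r : ℝ} (hr0 : 0 < r) (hr1 : r < 1) :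
    1 ≤ Real.log (Real.exp 1 / r) := by
  rw [Real.log_div (Real.exp_ne_zero 1) (ne_of_gt hr0), Real.log_exp]
  nlinarith [Real.log_nonpos hr0.le hr1.le]

set_option maxHeartbeats 1000000 in
lemma key_estimate (b d : ℝ) (hb : 0 < b) (hd : 0 < d) (r : ℝ) (hr0 : 0 < r) (hr1 : r < 1) :
    IntegrableOn (fun t : ℝ => (t - r) ^ (b-1) * ((1 - t) ^ (d-1) * t ^ (-b))) (Ioc r 1) ∧
    ∫ t in Ioc r 1, (t - r) ^ (b-1) * ((1 - t) ^ (d-1) * t ^ (-b)) ≤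
      ((1 + 2^(1-d)) * (2^b * (1/b + 1 + 2^(1-b))) + 2^b * (1 + 2^(1-b)) * (2^(-d)/d))
        * ((1-r)^(b+d-1) * Real.log (Real.exp 1 / r)) := by
  set L := Real.log (Real.exp 1 / r) with hL_def
  have hL : 1 ≤ L := one_le_log_exp_div hr0 hr1
  have h1r : (0:ℝ) < 1 - r := by linarith
  set φ : ℝ → ℝ := fun t => (t - r) ^ (b-1) * ((1 - t) ^ (d-1) * t ^ (-b)) with hφ_def
  have hφmeas : Measurable φ :=
    ((meas_rpow_base (b-1)).comp (measurable_id.sub_const r)).mul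
      ((((meas_rpow_base (d-1)).comp (measurable_const.sub measurable_id))).mul
        (meas_rpow_base (-b)))
  set m : ℝ := (1 + r) / 2 with hm_def
  have hrm : r < m := by rw [hm_def]; linarith
  have hm1 : m < 1 := by rw [hm_def]; linarith
  have hmhalf : (1:ℝ)/2 ≤ m := by rw [hm_def]; linarith
  have h1m : 1 - m = (1 - r) / 2 := by rw [hm_def]; ring
  have hmr : m - r = (1 - r) / 2 := by rw [hm_def]; ring
  have hφ0 : ∀ t ∈ Ioc r (1:ℝ), 0 ≤ φ t := by
    intro t ht
    exact mul_nonneg (Real.rpow_nonneg (by linarith [ht.1]) _)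
      (mul_nonneg (Real.rpow_nonneg (by linarith [ht.2]) _)
        (Real.rpow_nonneg (by linarith [ht.1]) _))
  -- integrability on the left piece
  have hIA : IntegrableOn φ (Ioc r m) := by
    apply integrableOn_of_le measurableSet_Ioc hφmeas
      ((integrableOn_sub_rpow r r m (b-1) (by linarith)).const_mul
        (((1-m)^(d-1) + (1-r)^(d-1)) * r^(-b)))
      (fun t ht => hφ0 t ⟨ht.1, le_trans ht.2 hm1.le⟩)
    intro t ht
    have h1 : (1 - t) ^ (d-1) ≤ (1-m)^(d-1) + (1-r)^(d-1) :=
      rpow_le_add_endpoints (by linarith) (by linarith [ht.2]) (by linarith [ht.1])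
    have h2 : t ^ (-b) ≤ r ^ (-b) :=
      Real.rpow_le_rpow_of_nonpos hr0 ht.1.le (by linarith)
    have h3 : 0 ≤ (t - r) ^ (b-1) := Real.rpow_nonneg (by linarith [ht.1]) _
    have h4 : (1 - t) ^ (d-1) * t ^ (-b) ≤ ((1-m)^(d-1) + (1-r)^(d-1)) * r^(-b) :=
      mul_le_mul h1 h2 (Real.rpow_nonneg (by linarith [ht.1]) _)
        (add_nonneg (Real.rpow_nonneg (by linarith) _) (Real.rpow_nonneg (by linarith) _))
    calc φ t ≤ (t - r) ^ (b-1) * (((1-m)^(d-1) + (1-r)^(d-1)) * r^(-b)) :=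
          mul_le_mul_of_nonneg_left h4 h3
      _ = ((1-m)^(d-1) + (1-r)^(d-1)) * r^(-b) * (t - r) ^ (b-1) := by ring
  -- integrability on the right piece
  have hIB : IntegrableOn φ (Ioc m 1) := by
    apply integrableOn_of_le measurableSet_Ioc hφmeas
      ((integrableOn_one_sub_rpow m (d-1) (by linarith) hm1.le).const_mul
        (((m-r)^(b-1) + (1-r)^(b-1)) * 2^b))
      (fun t ht => hφ0 t ⟨lt_trans hrm ht.1, ht.2⟩)
    intro t ht
    have ht0 : (0:ℝ) < t := by linarith [ht.1]
    have h1 : (t - r) ^ (b-1) ≤ (m-r)^(b-1) + (1-r)^(b-1) :=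
      rpow_le_add_endpoints (by linarith) (by linarith [ht.1]) (by linarith [ht.2])
    have h2 : t ^ (-b) ≤ (2:ℝ)^b := half_rpow_neg_le hb.le (by linarith [ht.1])
    have h3 : 0 ≤ (1 - t) ^ (d-1) := Real.rpow_nonneg (by linarith [ht.2]) _
    calc φ t = ((t-r)^(b-1) * t^(-b)) * (1-t)^(d-1) := by rw [hφ_def]; ring
      _ ≤ (((m-r)^(b-1) + (1-r)^(b-1)) * 2^b) * (1-t)^(d-1) := by
          apply mul_le_mul_of_nonneg_right _ h3
          exact mul_le_mul h1 h2 (Real.rpow_nonneg ht0.le _)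
            (add_nonneg (Real.rpow_nonneg (by linarith) _) (Real.rpow_nonneg (by linarith) _))
  have hI : IntegrableOn φ (Ioc r 1) := by
    rw [← Ioc_union_Ioc_eq_Ioc hrm.le hm1.le]
    exact hIA.union hIB
  refine ⟨hI, ?_⟩
  have hsplit : ∫ t in Ioc r 1, φ t = (∫ t in Ioc r m, φ t) + ∫ t in Ioc m 1, φ t := by
    rw [← Ioc_union_Ioc_eq_Ioc hrm.le hm1.le,
      setIntegral_union (Ioc_disjoint_Ioc_of_le le_rfl) measurableSet_Ioc hIA hIB]
  -- Part B
  have hB : ∫ t in Ioc m 1, φ t ≤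
      (2^b * (1 + 2^(1-b)) * (2^(-d)/d)) * ((1-r)^(b+d-1) * L) := by
    set cB : ℝ := 2^b * ((1 + 2^(1-b)) * (1-r)^(b-1)) with hcB_def
    have hptB : ∀ t ∈ Ioc m (1:ℝ), φ t ≤ cB * (1-t)^(d-1) := by
      intro t ht
      have ht0 : (0:ℝ) < t := by linarith [ht.1]
      have e1 : (t - r) ^ (b-1) ≤ (1 + 2^(1-b)) * (1-r)^(b-1) := by
        have h1 : (t - r) ^ (b-1) ≤ (m-r)^(b-1) + (1-r)^(b-1) :=
          rpow_le_add_endpoints (by linarith) (by linarith [ht.1]) (by linarith [ht.2])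
        have h2 : (m-r)^(b-1) = (1-r)^(b-1) * 2^(-(b-1)) := by
          rw [hmr, half_rpow _ _ (by linarith)]
        rw [h2, show -(b-1) = 1 - b by ring] at h1
        calc (t-r)^(b-1) ≤ (1-r)^(b-1) * 2^(1-b) + (1-r)^(b-1) := h1
          _ = (1 + 2^(1-b)) * (1-r)^(b-1) := by ring
      have e2 : t ^ (-b) ≤ (2:ℝ)^b := half_rpow_neg_le hb.le (by linarith [ht.1])
      have h3 : 0 ≤ (1 - t) ^ (d-1) := Real.rpow_nonneg (by linarith [ht.2]) _
      calc φ t = ((t-r)^(b-1) * t^(-b)) * (1-t)^(d-1) := by rw [hφ_def]; ring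
        _ ≤ ((1 + 2^(1-b)) * (1-r)^(b-1) * 2^b) * (1-t)^(d-1) := by
            apply mul_le_mul_of_nonneg_right _ h3
            apply mul_le_mul e1 e2 (Real.rpow_nonneg ht0.le _)
            have : (0:ℝ) < 2^(1-b) := Real.rpow_pos_of_pos (by norm_num) _
            exact mul_nonneg (by linarith) (Real.rpow_nonneg (by linarith) _)
        _ = cB * (1-t)^(d-1) := by rw [hcB_def]; ring
    have hint : ∫ t in Ioc m 1, φ t ≤ cB * ((1-m)^d / d) := by
      calc ∫ t in Ioc m 1, φ t ≤ ∫ t in Ioc m 1, cB * (1-t)^(d-1) :=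
            setIntegral_mono_on hIB
              ((integrableOn_one_sub_rpow m (d-1) (by linarith) hm1.le).const_mul cB)
              measurableSet_Ioc hptB
        _ = cB * ∫ t in Ioc m 1, (1-t)^(d-1) := by rw [integral_const_mul]
        _ = cB * ((1-m)^d / d) := by
            rw [integral_one_sub_rpow m (d-1) (by linarith) hm1.le,
              show d - 1 + 1 = d by ring]
    refine hint.trans ?_
    have e3 : (1-m)^d = (1-r)^d * 2^(-d) := by rw [h1m, half_rpow _ _ (by linarith)]
    have e4 : (1-r)^(b-1) * (1-r)^d = (1-r)^(b+d-1) := by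
      rw [← Real.rpow_add h1r, show b - 1 + d = b + d - 1 by ring]
    have e5 : cB * ((1-m)^d / d) = (2^b * (1 + 2^(1-b)) * (2^(-d)/d)) * (1-r)^(b+d-1) := by
      rw [hcB_def, e3, ← e4]; ring
    rw [e5, ← mul_assoc]
    apply le_mul_of_one_le_right _ hL
    have h2b : (0:ℝ) < 2^(1-b) := Real.rpow_pos_of_pos (by norm_num) _
    have h2b' : (0:ℝ) < 2^b := Real.rpow_pos_of_pos (by norm_num) _
    have h2d : (0:ℝ) < 2^(-d) := Real.rpow_pos_of_pos (by norm_num) _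
    have := Real.rpow_nonneg h1r.le (b+d-1)
    have : (0:ℝ) ≤ 2^b * (1 + 2^(1-b)) * (2^(-d)/d) := by
      apply mul_nonneg (mul_nonneg h2b'.le (by linarith)) (by positivity)
    exact mul_nonneg this (Real.rpow_nonneg h1r.le _)
  -- Part A
  have hA : ∫ t in Ioc r m, φ t ≤
      ((1 + 2^(1-d)) * (2^b * (1/b + 1 + 2^(1-b)))) * ((1-r)^(b+d-1) * L) := by
    set ψ : ℝ → ℝ := fun t => (t - r) ^ (b-1) * t ^ (-b) with hψ_def
    have hψmeas : Measurable ψ :=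
      ((meas_rpow_base (b-1)).comp (measurable_id.sub_const r)).mul (meas_rpow_base (-b))
    have hψ0 : ∀ t ∈ Ioc r m, 0 ≤ ψ t := by
      intro t ht
      exact mul_nonneg (Real.rpow_nonneg (by linarith [ht.1]) _)
        (Real.rpow_nonneg (by linarith [ht.1]) _)
    have hψle : ∀ s' : Set ℝ, s' ⊆ Ioc r m → ∀ t ∈ s', ψ t ≤ r^(-b) * (t-r)^(b-1) := by
      intro s' hs' t ht
      have ht' := hs' ht
      have h2 : t ^ (-b) ≤ r ^ (-b) :=
        Real.rpow_le_rpow_of_nonpos hr0 ht'.1.le (by linarith)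
      calc ψ t ≤ (t-r)^(b-1) * r^(-b) :=
            mul_le_mul_of_nonneg_left h2 (Real.rpow_nonneg (by linarith [ht'.1]) _)
        _ = r^(-b) * (t-r)^(b-1) := by ring
    have hIψ : IntegrableOn ψ (Ioc r m) :=
      integrableOn_of_le measurableSet_Ioc hψmeas
        ((integrableOn_sub_rpow r r m (b-1) (by linarith)).const_mul (r^(-b))) hψ0
        (hψle _ subset_rfl)
    set cA : ℝ := (1 + 2^(1-d)) * (1-r)^(d-1) with hcA_def
    have h2d : (0:ℝ) < 2^(1-d) := Real.rpow_pos_of_pos (by norm_num) _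
    have hcA0 : 0 ≤ cA := by
      rw [hcA_def]
      exact mul_nonneg (by linarith) (Real.rpow_nonneg h1r.le _)
    have hptA : ∀ t ∈ Ioc r m, φ t ≤ cA * ψ t := by
      intro t ht
      have h1 : (1 - t) ^ (d-1) ≤ cA := by
        have h1' : (1 - t) ^ (d-1) ≤ (1-m)^(d-1) + (1-r)^(d-1) :=
          rpow_le_add_endpoints (by linarith) (by linarith [ht.2]) (by linarith [ht.1])
        have h2' : (1-m)^(d-1) = (1-r)^(d-1) * 2^(-(d-1)) := by
          rw [h1m, half_rpow _ _ (by linarith)]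
        rw [h2', show -(d-1) = 1 - d by ring] at h1'
        calc (1-t)^(d-1) ≤ (1-r)^(d-1) * 2^(1-d) + (1-r)^(d-1) := h1'
          _ = cA := by rw [hcA_def]; ring
      have h3 : 0 ≤ (t - r) ^ (b-1) := Real.rpow_nonneg (by linarith [ht.1]) _
      have h4 : 0 ≤ t ^ (-b) := Real.rpow_nonneg (by linarith [ht.1]) _
      calc φ t = ((1-t)^(d-1)) * ((t-r)^(b-1) * t^(-b)) := by rw [hφ_def]; ring
        _ ≤ cA * ((t-r)^(b-1) * t^(-b)) :=
            mul_le_mul_of_nonneg_right h1 (mul_nonneg h3 h4)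
        _ = cA * ψ t := rfl
    have h2b1 : (1:ℝ) ≤ 2^b := one_le_two_rpow hb.le
    have h2b : (0:ℝ) < 2^(1-b) := Real.rpow_pos_of_pos (by norm_num) _
    have hJ : ∫ t in Ioc r m, ψ t ≤ (2^b * (1/b + 1 + 2^(1-b))) * ((1-r)^b * L) := by
      have hKJ0 : (0:ℝ) ≤ 2^b * (1/b + 1 + 2^(1-b)) := by
        have : (0:ℝ) < 1/b := by positivity
        nlinarith
      rcases le_or_gt (1/2 : ℝ) r with hhalf | hhalf
      · -- r ≥ 1/2 : one piece suffices
        have hpt : ∀ t ∈ Ioc r m, ψ t ≤ (2:ℝ)^b * (t-r)^(b-1) := by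
          intro t ht
          have h2 : t ^ (-b) ≤ (2:ℝ)^b := half_rpow_neg_le hb.le (by linarith [ht.1])
          calc ψ t ≤ (t-r)^(b-1) * 2^b :=
                mul_le_mul_of_nonneg_left h2 (Real.rpow_nonneg (by linarith [ht.1]) _)
            _ = 2^b * (t-r)^(b-1) := by ring
        have hcalc : ∫ t in Ioc r m, ψ t ≤ (1-r)^b / b := by
          calc ∫ t in Ioc r m, ψ t ≤ ∫ t in Ioc r m, (2:ℝ)^b * (t-r)^(b-1) :=
                setIntegral_mono_on hIψ
                  ((integrableOn_sub_rpow r r m (b-1) (by linarith)).const_mul _)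
                  measurableSet_Ioc hpt
            _ = 2^b * ((m-r)^b / b) := by
                rw [integral_const_mul, integral_base_sub_rpow r m (b-1) (by linarith)
                  (by simpa using hb.ne') hrm.le, show b - 1 + 1 = b by ring]
            _ = 2^b * (((1-r)^b * 2^(-b)) / b) := by
                rw [hmr, half_rpow _ _ (by linarith)]
            _ = (2^b * 2^(-b)) * (1-r)^b / b := by ring
            _ = (1-r)^b / b := by rw [two_rpow_mul_neg]; ring
        refine hcalc.trans ?_
        have hfrac : 1/b ≤ (2^b * (1/b + 1 + 2^(1-b))) * L := by
          have h1 : (1:ℝ)/b ≤ 2^b * (1/b + 1 + 2^(1-b)) := by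
            have : (0:ℝ) < 1/b := by positivity
            nlinarith
          calc (1:ℝ)/b ≤ 2^b * (1/b + 1 + 2^(1-b)) := h1
            _ ≤ (2^b * (1/b + 1 + 2^(1-b))) * L := le_mul_of_one_le_right hKJ0 hL
        calc (1-r)^b / b = (1/b) * (1-r)^b := by ring
          _ ≤ ((2^b * (1/b + 1 + 2^(1-b))) * L) * (1-r)^b :=
              mul_le_mul_of_nonneg_right hfrac (Real.rpow_nonneg h1r.le _)
          _ = (2^b * (1/b + 1 + 2^(1-b))) * ((1-r)^b * L) := by ring
      · -- r < 1/2 : split at s = min (2r) m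
        set s : ℝ := min (2*r) m with hs_def
        have hrs : r < s := lt_min (by linarith) hrm
        have hsm : s ≤ m := min_le_right _ _
        have hs2r : s ≤ 2*r := min_le_left _ _
        have hs0 : 0 < s := lt_trans hr0 hrs
        have hIψ1 : IntegrableOn ψ (Ioc r s) := hIψ.mono_set (Ioc_subset_Ioc_right hsm)
        have hIψ2 : IntegrableOn ψ (Ioc s m) := hIψ.mono_set (Ioc_subset_Ioc_left hrs.le)
        have hJsplit : ∫ t in Ioc r m, ψ t
            = (∫ t in Ioc r s, ψ t) + ∫ t in Ioc s m, ψ t := by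
          rw [← Ioc_union_Ioc_eq_Ioc hrs.le hsm,
            setIntegral_union (Ioc_disjoint_Ioc_of_le le_rfl) measurableSet_Ioc hIψ1 hIψ2]
        have hJ1 : ∫ t in Ioc r s, ψ t ≤ 1/b := by
          calc ∫ t in Ioc r s, ψ t ≤ ∫ t in Ioc r s, r^(-b) * (t-r)^(b-1) :=
                setIntegral_mono_on hIψ1
                  ((integrableOn_sub_rpow r r s (b-1) (by linarith)).const_mul _)
                  measurableSet_Ioc
                  (hψle _ (Ioc_subset_Ioc_right hsm))
            _ = r^(-b) * ((s-r)^b / b) := by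
                rw [integral_const_mul, integral_base_sub_rpow r s (b-1) (by linarith)
                  (by simpa using hb.ne') hrs.le, show b - 1 + 1 = b by ring]
            _ ≤ r^(-b) * (r^b / b) := by
                apply mul_le_mul_of_nonneg_left _ (Real.rpow_nonneg hr0.le _)
                exact div_le_div_of_nonneg_right
                  (Real.rpow_le_rpow (by linarith) (by linarith) hb.le) hb.le
            _ = (r^(-b) * r^b) / b := by ring
            _ = 1/b := by rw [← Real.rpow_add hr0]; simp
        have hJ2 : ∫ t in Ioc s m, ψ t ≤ (1 + 2^(1-b)) * L := by
          have hpt2 : ∀ t ∈ Ioc s m, ψ t ≤ (1 + 2^(1-b)) * t⁻¹ := by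
            intro t ht
            have h2rt : 2*r ≤ t := by
              rcases le_total (2*r) m with h | h
              · rw [hs_def, min_eq_left h] at ht; linarith [ht.1]
              · rw [hs_def, min_eq_right h] at ht; linarith [ht.1, ht.2]
            have ht0 : (0:ℝ) < t := by linarith
            have e1 : (t-r)^(b-1) ≤ (1 + 2^(1-b)) * t^(b-1) := by
              have h1 : (t-r)^(b-1) ≤ (t/2)^(b-1) + t^(b-1) :=
                rpow_le_add_endpoints (by linarith) (by linarith) (by linarith)
              rw [half_rpow _ _ ht0.le, show -(b-1) = 1 - b by ring] at h1
              calc (t-r)^(b-1) ≤ t^(b-1) * 2^(1-b) + t^(b-1) := h1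
                _ = (1 + 2^(1-b)) * t^(b-1) := by ring
            have e2 : t^(b-1) * t^(-b) = t⁻¹ := by
              rw [← Real.rpow_add ht0, show b - 1 + -b = -1 by ring, Real.rpow_neg_one]
            calc ψ t = (t-r)^(b-1) * t^(-b) := rfl
              _ ≤ ((1 + 2^(1-b)) * t^(b-1)) * t^(-b) :=
                  mul_le_mul_of_nonneg_right e1 (Real.rpow_nonneg ht0.le _)
              _ = (1 + 2^(1-b)) * (t^(b-1) * t^(-b)) := by ring
              _ = (1 + 2^(1-b)) * t⁻¹ := by rw [e2]
          have hint_inv : IntegrableOn (fun t : ℝ => t⁻¹) (Ioc s m) := by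
            refine (intervalIntegrable_iff_integrableOn_Ioc_of_le hsm).mp ?_
            apply ContinuousOn.intervalIntegrable
            apply ContinuousOn.inv₀ continuousOn_id
            intro x hx; rw [uIcc_of_le hsm] at hx
            exact ne_of_gt (lt_of_lt_of_le hs0 hx.1)
          have hm0 : (0:ℝ) < m := by linarith
          calc ∫ t in Ioc s m, ψ t ≤ ∫ t in Ioc s m, (1 + 2^(1-b)) * t⁻¹ :=
                setIntegral_mono_on hIψ2 (hint_inv.const_mul _) measurableSet_Ioc hpt2
            _ = (1 + 2^(1-b)) * Real.log (m/s) := by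
                rw [integral_const_mul, ← intervalIntegral.integral_of_le hsm,
                  integral_inv]
                rw [uIcc_of_le hsm]
                intro h
                exact absurd h.1 (not_le.mpr hs0)
            _ ≤ (1 + 2^(1-b)) * L := by
                apply mul_le_mul_of_nonneg_left _ (by linarith)
                rw [hL_def]
                apply Real.log_le_log (div_pos hm0 hs0)
                rw [div_le_div_iff₀ hs0 hr0]
                have he : (1:ℝ) ≤ Real.exp 1 := Real.one_le_exp zero_le_one
                nlinarith
        have hone : (1:ℝ) ≤ 2^b * (1-r)^b := by
          calc (1:ℝ) = 1^b := (Real.one_rpow b).symm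
            _ ≤ (2*(1-r))^b := Real.rpow_le_rpow zero_le_one (by linarith) hb.le
            _ = 2^b * (1-r)^b := Real.mul_rpow (by norm_num) (by linarith)
        have hP0 : (0:ℝ) ≤ 1/b + 1 + 2^(1-b) := by positivity
        have hL0 : (0:ℝ) ≤ L := by linarith
        have step1 : 1/b + (1 + 2^(1-b)) * L ≤ (1/b + 1 + 2^(1-b)) * L := by
          have : (0:ℝ) < 1/b := by positivity
          nlinarith
        have step2 : (1/b + 1 + 2^(1-b)) * L
            ≤ (1/b + 1 + 2^(1-b)) * ((2^b * (1-r)^b) * L) :=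
          mul_le_mul_of_nonneg_left (le_mul_of_one_le_left hL0 hone) hP0
        calc ∫ t in Ioc r m, ψ t = (∫ t in Ioc r s, ψ t) + ∫ t in Ioc s m, ψ t := hJsplit
          _ ≤ 1/b + (1 + 2^(1-b)) * L := add_le_add hJ1 hJ2
          _ ≤ (1/b + 1 + 2^(1-b)) * ((2^b * (1-r)^b) * L) := le_trans step1 step2
          _ = (2^b * (1/b + 1 + 2^(1-b))) * ((1-r)^b * L) := by ring
    calc ∫ t in Ioc r m, φ t ≤ ∫ t in Ioc r m, cA * ψ t :=
          setIntegral_mono_on hIA (hIψ.const_mul cA) measurableSet_Ioc hptA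
      _ = cA * ∫ t in Ioc r m, ψ t := by rw [integral_const_mul]
      _ ≤ cA * ((2^b * (1/b + 1 + 2^(1-b))) * ((1-r)^b * L)) :=
          mul_le_mul_of_nonneg_left hJ hcA0
      _ = ((1 + 2^(1-d)) * (2^b * (1/b + 1 + 2^(1-b)))) * ((((1-r)^(d-1) * (1-r)^b)) * L) := by
          rw [hcA_def]; ring
      _ = ((1 + 2^(1-d)) * (2^b * (1/b + 1 + 2^(1-b)))) * ((1-r)^(b+d-1) * L) := by
          rw [← Real.rpow_add h1r, show d - 1 + b = b + d - 1 by ring]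
  rw [hsplit]
  linarith [hA, hB]

set_option maxHeartbeats 1000000 in
/-- Lemma A, case `a = c`: the Mellin convolution of a function of type `(a,b)`
with a function of type `(a,d)` is bounded by `C r^a (1-r)^{b+d-1} ln(e/r)`. -/
theorem mellinConv_type_of_eq (f g : ℝ → ℝ) (a b d C₁ C₂ : ℝ)
    (ha : 0 ≤ a) (hb : 0 < b) (hd : 0 < d)
    (hf : ∀ r ∈ Set.Ioo (0:ℝ) 1, |f r| ≤ C₁ * r ^ a * (1 - r) ^ (b - 1))
    (hg : ∀ r ∈ Set.Ioo (0:ℝ) 1, |g r| ≤ C₂ * r ^ a * (1 - r) ^ (d - 1)) :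
    ∃ C : ℝ, ∀ r ∈ Set.Ioo (0:ℝ) 1,
      |mellinConv f g r| ≤
        C * r ^ a * (1 - r) ^ (b + d - 1) * Real.log (Real.exp 1 / r) := by
  have hC₁ : 0 ≤ C₁ := by
    have h := hf (1/2) (by norm_num)
    nlinarith [mul_pos (Real.rpow_pos_of_pos (show (0:ℝ) < 1/2 by norm_num) a)
      (Real.rpow_pos_of_pos (show (0:ℝ) < 1 - (1/2:ℝ) by norm_num) (b-1)),
      abs_nonneg (f (1/2))]
  have hC₂ : 0 ≤ C₂ := by
    have h := hg (1/2) (by norm_num)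
    nlinarith [mul_pos (Real.rpow_pos_of_pos (show (0:ℝ) < 1/2 by norm_num) a)
      (Real.rpow_pos_of_pos (show (0:ℝ) < 1 - (1/2:ℝ) by norm_num) (d-1)),
      abs_nonneg (g (1/2))]
  refine ⟨C₁ * C₂ *
    ((1 + 2^(1-d)) * (2^b * (1/b + 1 + 2^(1-b))) + 2^b * (1 + 2^(1-b)) * (2^(-d)/d)), ?_⟩
  rintro r ⟨hr0, hr1⟩
  obtain ⟨hI, hint⟩ := key_estimate b d hb hd r hr0 hr1
  set φ : ℝ → ℝ := fun t => (t - r) ^ (b-1) * ((1 - t) ^ (d-1) * t ^ (-b)) with hφ_def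
  have hIoo : mellinConv f g r = ∫ t in Ioo r 1, f (r/t) * g t / t := by
    rw [mellinConv]
    exact (setIntegral_congr_set Ioo_ae_eq_Ioc).symm
  have hgint : IntegrableOn (fun t => (C₁*C₂*r^a) * φ t) (Ioo r 1) :=
    (hI.mono_set Ioo_subset_Ioc_self).const_mul _
  have hbound : ∀ t ∈ Ioo r (1:ℝ), ‖f (r/t) * g t / t‖ ≤ (C₁*C₂*r^a) * φ t := by
    rintro t ⟨hrt, ht1⟩
    have ht0 : (0:ℝ) < t := lt_trans hr0 hrt
    have hrt1 : r/t ∈ Ioo (0:ℝ) 1 := ⟨div_pos hr0 ht0, (div_lt_one ht0).mpr hrt⟩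
    have h1 := hf (r/t) hrt1
    have h2 := hg t ⟨ht0, ht1⟩
    have hrtle : r/t ≤ 1 := hrt1.2.le
    have hnn1 : 0 ≤ C₁ * (r/t)^a * (1 - r/t)^(b-1) :=
      mul_nonneg (mul_nonneg hC₁ (Real.rpow_nonneg (div_pos hr0 ht0).le _))
        (Real.rpow_nonneg (by linarith) _)
    have step1 : ‖f (r/t) * g t / t‖ ≤
        (C₁ * (r/t)^a * (1 - r/t)^(b-1)) * (C₂ * t^a * (1-t)^(d-1)) / t := by
      rw [Real.norm_eq_abs, abs_div, abs_mul, abs_of_pos ht0]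
      exact div_le_div_of_nonneg_right
        (mul_le_mul h1 h2 (abs_nonneg _) hnn1) ht0.le
    refine step1.trans (le_of_eq ?_)
    have e1 : (r/t)^a = r^a / t^a := Real.div_rpow hr0.le ht0.le a
    have e2 : (1 - r/t) = (t-r)/t := by field_simp
    have e3 : ((t-r)/t)^(b-1) = (t-r)^(b-1) / t^(b-1) :=
      Real.div_rpow (by linarith) ht0.le _
    have h5 : t ^ (-b) = (t^(b-1) * t)⁻¹ := by
      rw [← Real.rpow_add_one ht0.ne' (b-1), show b - 1 + 1 = b by ring,
        ← Real.rpow_neg ht0.le]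
    have hφt : φ t = (t - r) ^ (b-1) * ((1 - t) ^ (d-1) * t ^ (-b)) := rfl
    rw [hφt, e2, e1, e3, h5]
    have hta : t^a ≠ 0 := (Real.rpow_pos_of_pos ht0 a).ne'
    have htb : t^(b-1) ≠ 0 := (Real.rpow_pos_of_pos ht0 (b-1)).ne'
    field_simp
  have hnnC : 0 ≤ C₁ * C₂ * r^a :=
    mul_nonneg (mul_nonneg hC₁ hC₂) (Real.rpow_nonneg hr0.le _)
  calc |mellinConv f g r| = ‖∫ t in Ioo r 1, f (r/t) * g t / t‖ := by
        rw [hIoo, Real.norm_eq_abs]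
    _ ≤ ∫ t in Ioo r 1, (C₁*C₂*r^a) * φ t :=
        MeasureTheory.norm_integral_le_of_norm_le hgint
          ((ae_restrict_iff' measurableSet_Ioo).mpr (ae_of_all _ hbound))
    _ = ∫ t in Ioc r 1, (C₁*C₂*r^a) * φ t := setIntegral_congr_set Ioo_ae_eq_Ioc
    _ = (C₁*C₂*r^a) * ∫ t in Ioc r 1, φ t := integral_const_mul _ _
    _ ≤ (C₁*C₂*r^a) * (((1 + 2^(1-d)) * (2^b * (1/b + 1 + 2^(1-b)))
          + 2^b * (1 + 2^(1-b)) * (2^(-d)/d)) * ((1-r)^(b+d-1) * Real.log (Real.exp 1 / r))) :=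
        mul_le_mul_of_nonneg_left hint hnnC
    _ = C₁ * C₂ * ((1 + 2^(1-d)) * (2^b * (1/b + 1 + 2^(1-b)))
          + 2^b * (1 + 2^(1-b)) * (2^(-d)/d))
          * r^a * (1-r)^(b+d-1) * Real.log (Real.exp 1 / r) := by ring
end

section
/- Let φ ∈ L¹([0,1], r dr) and suppose there exist natural numbers n₀ and p ≥ 1 such that the Mellin transform M(φ)(pk + n₀) = 0 for all k ∈ ℕ (with pk + n₀ ≥ 2). Then M(φ)(z) = 0 for all z with Re z > 2, and consequently φ = 0 almost everywhere. -/
open MeasureTheory Set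

/-- The Mellin transform of a function on `[0,1]`: `M(φ)(z) = ∫_0^1 φ(r) r^(z-1) dr`. -/
noncomputable def mellin01 (φ : ℝ → ℂ) (z : ℂ) : ℂ :=
  ∫ r in Set.Ioo (0:ℝ) 1, φ r * (r : ℂ) ^ (z - 1)

/-- Auxiliary: if an integrable function on `(0,1)` has vanishing moments along all
exponents `p * j`, then it vanishes a.e. on `(0,1)`. -/
lemma aux_moments_zero (h : ℝ → ℂ) (hInt : IntegrableOn h (Set.Ioo 0 1))
    (p : ℕ) (hp : 1 ≤ p)
    (hm : ∀ j : ℕ, ∫ r in Set.Ioo (0:ℝ) 1, h r * (r : ℂ) ^ (p * j) = 0) :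
    ∀ᵐ r ∂(volume.restrict (Set.Ioo (0:ℝ) 1)), h r = 0 := by
  set μ : Measure ℝ := volume.restrict (Set.Ioo (0:ℝ) 1) with hμ
  have hIntμ : Integrable h μ := hInt
  -- the projection onto [0,1]
  set π : ℝ → Set.Icc (0:ℝ) 1 := Set.projIcc 0 1 zero_le_one with hπ
  have hπmem : ∀ (r : ℝ) (hr : r ∈ Set.Ioo (0:ℝ) 1) (f : C(Set.Icc (0:ℝ) 1, ℝ)),
      f (π r) = f ⟨r, ⟨hr.1.le, hr.2.le⟩⟩ := by
    intro r hr f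
    congr 1
    exact Set.projIcc_of_mem zero_le_one ⟨hr.1.le, hr.2.le⟩
  -- the generator x ↦ x^p as a continuous map on [0,1]
  set xp : C(Set.Icc (0:ℝ) 1, ℝ) :=
    ⟨fun x => (x : ℝ) ^ p, by fun_prop⟩ with hxp
  set A : Subalgebra ℝ C(Set.Icc (0:ℝ) 1, ℝ) := Algebra.adjoin ℝ {xp} with hA
  -- the linear functional
  set L : C(Set.Icc (0:ℝ) 1, ℝ) → ℂ := fun f => ∫ r, f (π r) • h r ∂μ with hL
  have hint_f : ∀ f : C(Set.Icc (0:ℝ) 1, ℝ),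
      Integrable (fun r => f (π r) • h r) μ := by
    intro f
    have hc : Continuous fun r : ℝ => f (π r) :=
      f.continuous.comp continuous_projIcc
    refine Integrable.bdd_mul (f := fun r => ((f (π r) : ℝ) : ℂ)) (c := ‖f‖) hIntμ
      ?_ ?_ |>.congr ?_
    · exact (Complex.continuous_ofReal.comp hc).aestronglyMeasurable
    · refine Filter.Eventually.of_forall fun r => ?_
      simpa using f.norm_coe_le_norm (π r)
    · refine Filter.Eventually.of_forall fun r => ?_
      simp [Complex.real_smul, mul_comm]
  -- the functional vanishes on the subalgebra
  have hLA : ∀ f ∈ A, L f = 0 := by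
    intro f hf
    rw [hA, Algebra.adjoin_singleton_eq_range_aeval, AlgHom.mem_range] at hf
    obtain ⟨q, hq⟩ := hf
    have hstep : L f
        = ∫ r in Set.Ioo (0:ℝ) 1,
            (∑ i ∈ Finset.range (q.natDegree + 1), q.coeff i * r ^ (p * i)) • h r := by
      rw [hL]
      refine setIntegral_congr_fun measurableSet_Ioo fun r hr => ?_
      rw [hπmem r hr]
      congr 1
      rw [← hq, Polynomial.aeval_continuousMap_apply, Polynomial.eval_eq_sum_range]
      simp [hxp, pow_mul]
    have hterm : ∀ i : ℕ, Integrable (fun r => (q.coeff i * r ^ (p * i)) • h r) μ := by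
      intro i
      refine Integrable.mono' (g := fun r => |q.coeff i| * ‖h r‖)
        (hIntμ.norm.const_mul _) ?_ ?_
      · refine AEStronglyMeasurable.fun_smul ?_ hIntμ.aestronglyMeasurable
        exact ((continuous_const.mul ((continuous_id.pow _))).aestronglyMeasurable)
      · rw [hμ, ae_restrict_iff' measurableSet_Ioo]
        refine Filter.Eventually.of_forall fun r hr => ?_
        rw [norm_smul, Real.norm_eq_abs, abs_mul, abs_pow]
        have h1 : |r| ^ (p * i) ≤ 1 :=
          pow_le_one₀ (abs_nonneg r) (by rw [abs_of_pos hr.1]; exact hr.2.le)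
        calc |q.coeff i| * |r| ^ (p * i) * ‖h r‖ ≤ |q.coeff i| * 1 * ‖h r‖ := by gcongr
          _ = |q.coeff i| * ‖h r‖ := by ring
    rw [hstep]
    have : (fun r : ℝ => (∑ i ∈ Finset.range (q.natDegree + 1), q.coeff i * r ^ (p * i)) • h r)
        = fun r : ℝ => ∑ i ∈ Finset.range (q.natDegree + 1), (q.coeff i * r ^ (p * i)) • h r := by
      funext r
      rw [Finset.sum_smul]
    rw [this, integral_finset_sum _ fun i _ => hterm i]
    refine Finset.sum_eq_zero fun i _ => ?_
    have : (fun r : ℝ => (q.coeff i * r ^ (p * i)) • h r)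
        = fun r : ℝ => q.coeff i • ((r : ℝ) ^ (p * i) • h r) := by
      funext r; rw [mul_smul]
    rw [this, integral_smul]
    have : ∫ r, ((r : ℝ) ^ (p * i)) • h r ∂μ = ∫ r in Set.Ioo (0:ℝ) 1, h r * (r : ℂ) ^ (p * i) := by
      refine setIntegral_congr_fun measurableSet_Ioo fun r hr => ?_
      rw [Complex.real_smul]
      push_cast
      ring
    rw [this, hm i, smul_zero]
  -- Stone-Weierstrass: the subalgebra is dense
  have hsep : A.SeparatesPoints := by
    intro x y hxy
    refine ⟨_, ⟨xp, Algebra.subset_adjoin rfl, rfl⟩, ?_⟩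
    intro hcon
    exact hxy (Subtype.ext
      ((pow_left_strictMonoOn₀ (by omega : p ≠ 0)).injOn x.2.1 y.2.1 hcon))
  have hdense : A.topologicalClosure = ⊤ :=
    ContinuousMap.subalgebra_topologicalClosure_eq_top_of_separatesPoints A hsep
  -- the functional vanishes on all continuous functions
  have hLall : ∀ f : C(Set.Icc (0:ℝ) 1, ℝ), L f = 0 := by
    intro f
    have hf : f ∈ closure (A : Set C(Set.Icc (0:ℝ) 1, ℝ)) := by
      have : f ∈ A.topologicalClosure := hdense ▸ Algebra.mem_top
      exact this
    obtain ⟨u, huA, hulim⟩ := mem_closure_iff_seq_limit.1 hf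
    have hdiff : ∀ n : ℕ, ‖L f - L (u n)‖ ≤ ‖f - u n‖ * ∫ r, ‖h r‖ ∂μ := by
      intro n
      have hsub : L f - L (u n) = ∫ r, (f - u n) (π r) • h r ∂μ := by
        rw [hL]
        rw [← integral_sub (hint_f f) (hint_f (u n))]
        congr 1
        funext r
        simp [sub_smul]
      rw [hsub]
      calc ‖∫ r, (f - u n) (π r) • h r ∂μ‖ ≤ ∫ r, ‖(f - u n) (π r) • h r‖ ∂μ :=
            norm_integral_le_integral_norm _
        _ ≤ ∫ r, ‖f - u n‖ * ‖h r‖ ∂μ := by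
            refine integral_mono_of_nonneg (Filter.Eventually.of_forall fun r => norm_nonneg _)
              (hIntμ.norm.const_mul _) (Filter.Eventually.of_forall fun r => ?_)
            simp only [norm_smul]
            gcongr
            exact (f - u n).norm_coe_le_norm (π r)
        _ = ‖f - u n‖ * ∫ r, ‖h r‖ ∂μ := by
            simp_rw [← smul_eq_mul]
            rw [integral_smul]
    have hzero : Filter.Tendsto (fun n => ‖L f - L (u n)‖) Filter.atTop (nhds 0) := by
      refine squeeze_zero (fun n => norm_nonneg _) hdiff ?_
      have : Filter.Tendsto (fun n => ‖f - u n‖) Filter.atTop (nhds 0) := by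
        have := hulim
        rw [tendsto_iff_norm_sub_tendsto_zero] at this
        simpa [norm_sub_rev] using this
      simpa using this.mul_const (∫ r, ‖h r‖ ∂μ)
    have : Filter.Tendsto (fun _ : ℕ => L f) Filter.atTop (nhds 0) := by
      have heq : ∀ n, L f - L (u n) = L f := fun n => by rw [hLA (u n) (huA n), sub_zero]
      have := (tendsto_zero_iff_norm_tendsto_zero).2 hzero
      simpa [heq] using this
    exact tendsto_nhds_unique tendsto_const_nhds this
  -- conclude via test functions
  refine ae_eq_zero_of_integral_contDiff_smul_eq_zero (hIntμ.locallyIntegrable) ?_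
  intro g hg _
  have : ∫ x, g x • h x ∂μ = L ⟨fun x : Set.Icc (0:ℝ) 1 => g x,
      hg.continuous.comp continuous_subtype_val⟩ := by
    rw [hL]
    refine setIntegral_congr_fun measurableSet_Ioo fun r hr => ?_
    rw [hπmem r hr]
    rfl
  rw [this, hLall]

/-- If `φ ∈ L¹([0,1], r dr)` and its Mellin transform vanishes on an arithmetic
progression `p k + n₀`, then the Mellin transform vanishes identically on
`{Re z > 2}` and `φ = 0` almost everywhere. -/
theorem mellin01_eq_zero_of_arith_prog (φ : ℝ → ℂ) (n₀ p : ℕ) (hp : 1 ≤ p)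
    (hφ : IntegrableOn (fun r => φ r * (r : ℂ)) (Set.Ioc 0 1))
    (hvanish : ∀ k : ℕ, 2 ≤ p * k + n₀ → mellin01 φ (p * k + n₀) = 0) :
    (∀ z : ℂ, 2 < z.re → mellin01 φ z = 0) ∧
      (∀ᵐ r : ℝ, r ∈ Set.Ioc (0:ℝ) 1 → φ r = 0) := by
  have hφ' : IntegrableOn (fun r => φ r * (r : ℂ)) (Set.Ioo 0 1) :=
    hφ.mono_set Set.Ioo_subset_Ioc_self
  -- integrability of φ r * r^n for n ≥ 1 on (0,1)
  have hIntn : ∀ n : ℕ, 1 ≤ n → IntegrableOn (fun r => φ r * (r : ℂ) ^ n) (Set.Ioo 0 1) := by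
    intro n hn
    refine Integrable.mono' (g := fun r => ‖φ r * (r : ℂ)‖) hφ'.norm ?_ ?_
    · have : (fun r : ℝ => φ r * (r : ℂ) ^ n)
          = fun r : ℝ => (φ r * (r : ℂ)) * (r : ℂ) ^ (n - 1) := by
        funext r
        rw [mul_assoc, ← pow_succ']
        congr 2
        omega
      rw [this]
      exact hφ'.aestronglyMeasurable.mul
        ((Complex.continuous_ofReal.pow _).aestronglyMeasurable)
    · rw [ae_restrict_iff' measurableSet_Ioo]
      refine Filter.Eventually.of_forall fun r hr => ?_
      have h1 : φ r * (r : ℂ) ^ n = (φ r * (r : ℂ)) * (r : ℂ) ^ (n - 1) := by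
        rw [mul_assoc, ← pow_succ']
        congr 2
        omega
      rw [h1, norm_mul]
      calc ‖φ r * (r : ℂ)‖ * ‖(r : ℂ) ^ (n - 1)‖ ≤ ‖φ r * (r : ℂ)‖ * 1 := by
            gcongr
            rw [norm_pow, Complex.norm_real, Real.norm_eq_abs, abs_of_pos hr.1]
            exact pow_le_one₀ (le_of_lt hr.1) (le_of_lt hr.2)
        _ = ‖φ r * (r : ℂ)‖ := mul_one _
  set m₁ : ℕ := 2 * p + n₀ - 1 with hm₁
  have hm₁1 : 1 ≤ m₁ := by omega
  set h : ℝ → ℂ := fun r => φ r * (r : ℂ) ^ m₁ with hh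
  have hhInt : IntegrableOn h (Set.Ioo 0 1) := hIntn m₁ hm₁1
  -- moments of h vanish
  have hmom : ∀ j : ℕ, ∫ r in Set.Ioo (0:ℝ) 1, h r * (r : ℂ) ^ (p * j) = 0 := by
    intro j
    have hk : 2 ≤ p * (2 + j) + n₀ := by nlinarith
    have hv := hvanish (2 + j) hk
    rw [mellin01] at hv
    rw [← hv]
    refine setIntegral_congr_fun measurableSet_Ioo fun r hr => ?_
    have hz : (p : ℂ) * (2 + j : ℕ) + (n₀ : ℕ) - 1 = ((m₁ + p * j : ℕ) : ℂ) := by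
      have hpm : p * (2 + j) = p * 2 + p * j := Nat.mul_add p 2 j
      have : (m₁ + p * j : ℕ) = p * (2 + j) + n₀ - 1 := by omega
      rw [this, Nat.cast_sub (by omega)]
      push_cast
      ring
    rw [hz, Complex.cpow_natCast, hh, pow_add, mul_assoc]
  have hae : ∀ᵐ r ∂(volume.restrict (Set.Ioo (0:ℝ) 1)), h r = 0 :=
    aux_moments_zero h hhInt p hp hmom
  -- φ = 0 a.e. on Ioo
  have hφ0 : ∀ᵐ r : ℝ, r ∈ Set.Ioo (0:ℝ) 1 → φ r = 0 := by
    rw [← ae_restrict_iff' measurableSet_Ioo]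
    filter_upwards [hae, ae_restrict_mem measurableSet_Ioo] with r h0 hr
    rw [hh] at h0
    have hr0 : (r : ℂ) ≠ 0 := by
      exact_mod_cast ne_of_gt hr.1
    exact (mul_eq_zero.1 h0).resolve_right (pow_ne_zero _ hr0)
  constructor
  · intro z _
    rw [mellin01]
    have : ∀ᵐ r ∂(volume.restrict (Set.Ioo (0:ℝ) 1)), φ r * (r : ℂ) ^ (z - 1) = 0 := by
      rw [ae_restrict_iff' measurableSet_Ioo]
      filter_upwards [hφ0] with r h0 hr
      rw [h0 hr, zero_mul]
    exact integral_eq_zero_of_ae this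
  · have h1 : ∀ᵐ r : ℝ, r ≠ 1 := by
      rw [ae_iff]
      have : {r : ℝ | ¬r ≠ 1} = {1} := by ext r; simp
      rw [this]
      exact Real.volume_singleton
    filter_upwards [hφ0, h1] with r h0 hr1 hr
    exact h0 ⟨hr.1, lt_of_le_of_ne hr.2 hr1⟩
end

section
/- Suppose f is a bounded analytic function on the right half-plane {z : Re z > 0} which vanishes at pairwise distinct points z₁, z₂, … satisfying inf_n |z_n| > 0 and Σ_{n≥1} Re(1/z_n) = ∞. Then f vanishes identically on {z : Re z > 0}. -/
open Complex Filter Set Topology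

noncomputable def bq (f : ℂ → ℂ) (a : ℂ) : ℂ → ℂ := fun z =>
  dslope f a z * (z + (starRingEnd ℂ) a)

lemma bq_mul {f : ℂ → ℂ} {a : ℂ} (hfa : f a = 0) (z : ℂ) :
    bq f a z * (z - a) = f z * (z + (starRingEnd ℂ) a) := by
  rcases eq_or_ne z a with rfl | h
  · simp [hfa]
  · rw [bq, dslope_of_ne _ h, slope_def_field, hfa, sub_zero]
    field_simp [sub_ne_zero.2 h]

lemma bq_diff {f : ℂ → ℂ} {s : Set ℂ} {a : ℂ} (hs : s ∈ nhds a)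
    (hf : DifferentiableOn ℂ f s) : DifferentiableOn ℂ (bq f a) s :=
  ((Complex.differentiableOn_dslope hs).2 hf).mul
    ((differentiable_id.add_const _).differentiableOn)

lemma abs_im_axis (b : ℂ) (y : ℝ) :
    ‖↑y * I + (starRingEnd ℂ) b‖ = ‖↑y * I - b‖ := by
  have : (↑y * I + (starRingEnd ℂ) b) = (starRingEnd ℂ) (-(↑y * I - b)) := by
    simp only [map_neg, map_sub, map_mul, Complex.conj_I, Complex.conj_ofReal]
    ring
  rw [this, Complex.norm_conj, norm_neg]

lemma bl_step {f : ℂ → ℂ} {M : ℝ} {a : ℂ}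
    (hf : DifferentiableOn ℂ f {z : ℂ | 0 < z.re})
    (hM : ∀ u : ℂ, 0 < u.re → ‖f u‖ ≤ M)
    (ha : 0 < a.re) (hfa : f a = 0) :
    ∀ w : ℂ, 0 < w.re →
      ‖f w‖ * ‖w + (starRingEnd ℂ) a‖ ≤ M * ‖w - a‖ := by
  have hM0 : 0 ≤ M := le_trans (norm_nonneg _) (hM a ha)
  intro w hw
  have key : ∀ ε : ℝ, 0 < ε → ε < a.re → ε ≤ w.re →
      ‖f w‖ * ‖w - 2 * ε + (starRingEnd ℂ) a‖ ≤ M * ‖w - a‖ := by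
    intro ε hε hεa hεw
    set b : ℂ := a - ε with hb
    have hbre : 0 < b.re := by simp [hb]; linarith
    set fε : ℂ → ℂ := fun u => f (u + ε) with hfε
    have hfεb : fε b = 0 := by simp [hfε, hb, hfa]
    have hfεM : ∀ u : ℂ, 0 ≤ u.re → ‖fε u‖ ≤ M := fun u hu =>
      hM _ (by simp; linarith)
    set G : ℂ → ℂ := bq fε b with hG
    have hsopen : IsOpen {ζ : ℂ | -ε < ζ.re} := isOpen_lt continuous_const Complex.continuous_re
    have hfεd : DifferentiableOn ℂ fε {ζ : ℂ | -ε < ζ.re} :=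
      hf.comp ((differentiable_id.add_const _).differentiableOn)
        (fun v hv => by
          simp only [Set.mem_setOf_eq, id_eq, Complex.add_re, Complex.ofReal_re] at hv ⊢
          linarith)
    have hGd : DifferentiableOn ℂ G {ζ : ℂ | -ε < ζ.re} :=
      bq_diff (hsopen.mem_nhds (by simp [hb]; linarith)) hfεd
    -- the multiplicative identity for G
    have hGmul : ∀ ζ : ℂ, G ζ * (ζ - b) = fε ζ * (ζ + (starRingEnd ℂ) b) :=
      fun ζ => bq_mul hfεb ζ
    -- global bound on the closed half plane
    obtain ⟨K, hK0, hK⟩ : ∃ K : ℝ, 0 ≤ K ∧ ∀ ζ : ℂ, 0 ≤ ζ.re → ‖G ζ‖ ≤ K := by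
      obtain ⟨C, hC⟩ := (isCompact_closedBall b (b.re / 2)).exists_bound_of_continuousOn
        (hGd.continuousOn.mono (by
          intro ζ hζ
          simp only [Metric.mem_closedBall] at hζ
          have : |ζ.re - b.re| ≤ b.re / 2 := by
            have := Complex.abs_re_le_norm (ζ - b)
            rw [Complex.sub_re] at this
            exact this.trans (by rwa [Complex.dist_eq] at hζ)
          have := abs_le.1 this
          simp only [Set.mem_setOf_eq]
          linarith))
      refine ⟨max C (5 * M), le_trans (norm_nonneg (G b)) ((hC b (by simp [Metric.mem_closedBall]; positivity)).trans (le_max_left _ _)), ?_⟩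
      intro ζ hζ
      rcases le_or_gt (‖ζ - b‖) (b.re / 2) with hd | hd
      · exact (hC ζ (by simpa [Metric.mem_closedBall, Complex.dist_eq] using hd)).trans (le_max_left _ _)
      · refine le_trans ?_ (le_max_right _ _)
        have hne : ζ - b ≠ 0 := by
          intro h0; rw [h0] at hd; simp at hd; linarith
        have habs : 0 < ‖ζ - b‖ := by simpa using norm_pos_iff.mpr hne
        have h1 : ‖G ζ‖ * ‖ζ - b‖ = ‖fε ζ‖ * ‖ζ + (starRingEnd ℂ) b‖ := by
          have := congrArg norm (hGmul ζ)
          simpa [map_mul] using this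
        have h2 : ‖ζ + (starRingEnd ℂ) b‖ ≤ ‖ζ - b‖ + 2 * b.re := by
          have : ζ + (starRingEnd ℂ) b = (ζ - b) + (b + (starRingEnd ℂ) b) := by ring
          rw [this]
          refine (norm_add_le _ _).trans ?_
          rw [Complex.add_conj]
          simp [Complex.norm_real]
          rw [abs_of_pos hbre]
        have h3 : ‖ζ - b‖ + 2 * b.re ≤ 5 * ‖ζ - b‖ := by linarith
        have h4 : ‖G ζ‖ * ‖ζ - b‖ ≤ (5 * M) * ‖ζ - b‖ := by
          rw [h1]
          calc ‖fε ζ‖ * ‖ζ + (starRingEnd ℂ) b‖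
              ≤ M * (5 * ‖ζ - b‖) :=
                mul_le_mul (hfεM ζ hζ) (h2.trans h3) (by positivity) hM0
            _ = (5 * M) * ‖ζ - b‖ := by ring
        exact le_of_mul_le_mul_right h4 habs
    -- Phragmen-Lindelof
    have hPL : ∀ ζ : ℂ, 0 ≤ ζ.re → ‖G ζ‖ ≤ M := by
      intro ζ hζ
      refine PhragmenLindelof.right_half_plane_of_bounded_on_real ?_ ?_ ?_ ?_ hζ
      · refine DifferentiableOn.diffContOnCl ?_
        rw [Complex.closure_setOf_lt_re]
        exact hGd.mono (fun u hu => by simp at hu ⊢; linarith)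
      · refine ⟨1, one_lt_two, 0, ?_⟩
        rw [Asymptotics.isBigO_iff]
        refine ⟨K, ?_⟩
        rw [Filter.eventually_inf_principal]
        filter_upwards with u hu
        simp only [zero_mul, Real.exp_zero, norm_one, mul_one]
        exact hK u (le_of_lt hu)
      · refine isBoundedUnder_of_eventually_le (a := K) ?_
        filter_upwards [Filter.eventually_ge_atTop (0:ℝ)] with x hx
        exact hK x (by simpa using hx)
      · intro y
        have hne : (↑y * I - b) ≠ 0 := by
          intro h0
          have : b.re = 0 := by
            have := congrArg Complex.re h0
            simpa using this.symm
          linarith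
        have habs : 0 < ‖↑y * I - b‖ := norm_pos_iff.mpr hne
        have h1 : ‖G (↑y * I)‖ * ‖↑y * I - b‖
            = ‖fε (↑y * I)‖ * ‖↑y * I + (starRingEnd ℂ) b‖ := by
          have := congrArg norm (hGmul (↑y * I))
          simpa [map_mul] using this
        rw [abs_im_axis] at h1
        have h2 : ‖fε (↑y * I)‖ ≤ M := hfεM _ (by simp)
        have := mul_le_mul_of_nonneg_right h2 (le_of_lt habs)
        rw [← h1] at this
        exact le_of_mul_le_mul_right this habs
    -- evaluate at w - ε
    have hval := hPL (w - ε) (by simp; linarith)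
    have h1 : ‖G (w - ε)‖ * ‖w - a‖
        = ‖f w‖ * ‖w - 2 * ε + (starRingEnd ℂ) a‖ := by
      have h2 := hGmul (w - ↑ε)
      have e1 : (w - ↑ε) - b = w - a := by rw [hb]; ring
      have e2 : fε (w - ↑ε) = f w := by simp [hfε]
      have e3 : (w - ↑ε) + (starRingEnd ℂ) b = w - 2 * ε + (starRingEnd ℂ) a := by
        rw [hb, map_sub, Complex.conj_ofReal]; ring
      rw [e1, e2, e3] at h2
      have := congrArg norm h2
      simpa [map_mul] using this
    rw [← h1]
    exact mul_le_mul_of_nonneg_right hval (by positivity)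
  -- take the limit ε → 0⁺
  have hlim : Tendsto (fun ε : ℝ => ‖f w‖ * ‖w - 2 * ε + (starRingEnd ℂ) a‖)
      (nhdsWithin 0 (Set.Ioi 0)) (nhds (‖f w‖ * ‖w + (starRingEnd ℂ) a‖)) := by
    refine Tendsto.mono_left ?_ nhdsWithin_le_nhds
    have : Continuous (fun ε : ℝ => ‖f w‖ * ‖w - 2 * ε + (starRingEnd ℂ) a‖) := by
      continuity
    have h0 := this.tendsto 0
    simpa using h0
  refine le_of_tendsto hlim ?_
  have hmem : Set.Ioo (0:ℝ) (min a.re w.re) ∈ nhdsWithin (0:ℝ) (Set.Ioi 0) :=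
    Ioo_mem_nhdsGT_of_mem ⟨le_refl 0, lt_min ha hw⟩
  filter_upwards [hmem] with ε hε
  exact key ε hε.1 (lt_of_lt_of_le hε.2 (min_le_left _ _))
    (le_of_lt (lt_of_lt_of_le hε.2 (min_le_right _ _)))


lemma bq_bound {f : ℂ → ℂ} {M : ℝ} {a : ℂ}
    (hf : DifferentiableOn ℂ f {z : ℂ | 0 < z.re})
    (hM : ∀ u : ℂ, 0 < u.re → ‖f u‖ ≤ M)
    (ha : 0 < a.re) (hfa : f a = 0) :
    ∀ w : ℂ, 0 < w.re → ‖bq f a w‖ ≤ M := by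
  have hopen : IsOpen {u : ℂ | 0 < u.re} := isOpen_lt continuous_const Complex.continuous_re
  have hstep := bl_step hf hM ha hfa
  have hne : ∀ w : ℂ, 0 < w.re → w ≠ a → ‖bq f a w‖ ≤ M := by
    intro w hw hwa
    have habs : 0 < ‖w - a‖ := norm_pos_iff.mpr (sub_ne_zero.2 hwa)
    have h1 : ‖bq f a w‖ * ‖w - a‖
        = ‖f w‖ * ‖w + (starRingEnd ℂ) a‖ := by
      have := congrArg norm (bq_mul hfa w)
      simpa [map_mul] using this
    have h2 : ‖bq f a w‖ * ‖w - a‖ ≤ M * ‖w - a‖ := by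
      rw [h1]; exact hstep w hw
    exact le_of_mul_le_mul_right h2 habs
  intro w hw
  rcases eq_or_ne w a with rfl | hwa
  · have hcont : ContinuousAt (bq f w) w :=
      ((bq_diff (hopen.mem_nhds hw) hf).continuousOn).continuousAt (hopen.mem_nhds hw)
    have htend : Tendsto (fun x => ‖bq f w x‖) (nhdsWithin w {w}ᶜ) (nhds ‖bq f w w‖) :=
      (hcont.tendsto.mono_left nhdsWithin_le_nhds).norm
    refine le_of_tendsto htend ?_
    filter_upwards [self_mem_nhdsWithin,
      mem_nhdsWithin_of_mem_nhds (hopen.mem_nhds hw)] with x hx1 hx2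
    exact hne x hx2 hx1
  · exact hne w hw hwa

noncomputable def FF (f : ℂ → ℂ) (z : ℕ → ℂ) : ℕ → ℂ → ℂ
  | 0 => f
  | n + 1 => bq (FF f z n) (z n)

lemma FF_inv {f : ℂ → ℂ} {M : ℝ} {z : ℕ → ℂ}
    (hf : DifferentiableOn ℂ f {u : ℂ | 0 < u.re})
    (hM : ∀ u : ℂ, 0 < u.re → ‖f u‖ ≤ M)
    (hzre : ∀ n, 0 < (z n).re) (hinj : Function.Injective z)
    (hzero : ∀ n, f (z n) = 0) :
    ∀ n, DifferentiableOn ℂ (FF f z n) {u : ℂ | 0 < u.re} ∧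
      (∀ u : ℂ, 0 < u.re → ‖FF f z n u‖ ≤ M) ∧
      (∀ m, n ≤ m → FF f z n (z m) = 0) := by
  have hopen : IsOpen {u : ℂ | 0 < u.re} := isOpen_lt continuous_const Complex.continuous_re
  intro n
  induction n with
  | zero => exact ⟨hf, hM, fun m _ => hzero m⟩
  | succ n ih =>
    obtain ⟨hd, hb, hz⟩ := ih
    refine ⟨bq_diff (hopen.mem_nhds (hzre n)) hd,
      bq_bound hd hb (hzre n) (hz n le_rfl), ?_⟩
    intro m hm
    have hzn : FF f z n (z n) = 0 := hz n le_rfl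
    have hne : z m - z n ≠ 0 := sub_ne_zero.2 (fun h => by
      have := hinj h; omega)
    have h1 := bq_mul hzn (z m)
    rw [hz m (by omega)] at h1
    simp only [zero_mul] at h1
    have : FF f z (n + 1) (z m) * (z m - z n) = 0 := h1
    rcases mul_eq_zero.1 this with h | h
    · exact h
    · exact absurd h hne

lemma FF_prod {f : ℂ → ℂ} {z : ℕ → ℂ}
    (hzero : ∀ k, FF f z k (z k) = 0) :
    ∀ n (w : ℂ), FF f z n w * ∏ k ∈ Finset.range n, (w - z k)
      = f w * ∏ k ∈ Finset.range n, (w + (starRingEnd ℂ) (z k)) := by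
  intro n w
  induction n with
  | zero => simp [FF]
  | succ n ih =>
    rw [Finset.prod_range_succ, Finset.prod_range_succ]
    have h := bq_mul (hzero n) w
    calc FF f z (n + 1) w * ((∏ k ∈ Finset.range n, (w - z k)) * (w - z n))
        = (bq (FF f z n) (z n) w * (w - z n)) * ∏ k ∈ Finset.range n, (w - z k) := by
          simp only [FF]; ring
      _ = (FF f z n w * (w + (starRingEnd ℂ) (z n))) * ∏ k ∈ Finset.range n, (w - z k) := by
          rw [h]
      _ = (FF f z n w * ∏ k ∈ Finset.range n, (w - z k)) * (w + (starRingEnd ℂ) (z n)) := by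
          ring
      _ = (f w * ∏ k ∈ Finset.range n, (w + (starRingEnd ℂ) (z k)))
            * (w + (starRingEnd ℂ) (z n)) := by rw [ih]
      _ = f w * ((∏ k ∈ Finset.range n, (w + (starRingEnd ℂ) (z k)))
            * (w + (starRingEnd ℂ) (z n))) := by ring

/-- Blaschke-type uniqueness theorem: a bounded analytic function on the right
half-plane which vanishes at pairwise distinct points `z n` with `inf |z n| > 0`
and `∑ Re(1/z n) = ∞` vanishes identically. -/
theorem vanishes_of_blaschke (f : ℂ → ℂ)
    (hf : DifferentiableOn ℂ f {z : ℂ | 0 < z.re})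
    (hbdd : ∃ M : ℝ, ∀ z : ℂ, 0 < z.re → ‖f z‖ ≤ M)
    (z : ℕ → ℂ) (hzre : ∀ n, 0 < (z n).re) (hinj : Function.Injective z)
    (hinf : ∃ δ : ℝ, 0 < δ ∧ ∀ n, δ ≤ ‖z n‖)
    (hsum : Tendsto (fun N => ∑ n ∈ Finset.range N, (1 / z n).re) atTop atTop)
    (hzero : ∀ n, f (z n) = 0) :
    ∀ w : ℂ, 0 < w.re → f w = 0 := by
  obtain ⟨M, hM⟩ := hbdd
  obtain ⟨δ, hδ, hδle⟩ := hinf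
  have hM0 : 0 ≤ M := le_trans (norm_nonneg _) (hM (z 0) (hzre 0))
  intro w hw
  have hinv := FF_inv hf hM hzre hinj hzero
  have hprod := FF_prod (f := f) (z := z) (fun k => (hinv k).2.2 k le_rfl)
  -- positive denominators
  set P : ℕ → ℝ := fun k => ‖w + (starRingEnd ℂ) (z k)‖ with hP
  have hPpos : ∀ k, 0 < P k := by
    intro k
    apply norm_pos_iff.mpr
    intro h0
    have := congrArg Complex.re h0
    simp only [Complex.add_re, Complex.conj_re, Complex.zero_re] at this
    have := hzre k
    linarith
  set r : ℕ → ℝ := fun k => ‖w - z k‖ / P k with hr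
  set t : ℕ → ℝ := fun k => 4 * w.re * (z k).re / (P k) ^ 2 with ht
  have hrnn : ∀ k, 0 ≤ r k := fun k => div_nonneg (norm_nonneg _) (hPpos k).le
  -- r k ^ 2 = 1 - t k
  have hrsq : ∀ k, (r k) ^ 2 = 1 - t k := by
    intro k
    have hid : Complex.normSq (w + (starRingEnd ℂ) (z k)) - Complex.normSq (w - z k)
        = 4 * w.re * (z k).re := by
      simp only [Complex.normSq_apply, Complex.add_re, Complex.add_im, Complex.sub_re,
        Complex.sub_im, Complex.conj_re, Complex.conj_im]
      ring
    have h1 : ‖w - z k‖ ^ 2 = Complex.normSq (w - z k) := Complex.sq_norm _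
    have h2 : P k ^ 2 = Complex.normSq (w + (starRingEnd ℂ) (z k)) := Complex.sq_norm _
    simp only [hr, ht]
    rw [div_pow, h1, h2]
    have hP2 : (0:ℝ) < Complex.normSq (w + (starRingEnd ℂ) (z k)) := by
      rw [← h2]; exact pow_pos (hPpos k) 2
    rw [eq_sub_iff_add_eq, ← add_div, div_eq_one_iff_eq hP2.ne']
    linarith [hid]
  -- r k ≤ exp (-(t k)/2)
  have hrle : ∀ k, r k ≤ Real.exp (-(t k) / 2) := by
    intro k
    have h1 : (r k) ^ 2 ≤ Real.exp (-(t k)) := by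
      rw [hrsq k]
      linarith [Real.add_one_le_exp (-(t k))]
    have h2 : Real.exp (-(t k)) = (Real.exp (-(t k) / 2)) ^ 2 := by
      rw [sq, ← Real.exp_add]; ring_nf
    have := Real.sqrt_le_sqrt h1
    rwa [Real.sqrt_sq (hrnn k), h2, Real.sqrt_sq (Real.exp_nonneg _)] at this
  -- main inequality
  have hmain : ∀ n, ‖f w‖ ≤ M * ∏ k ∈ Finset.range n, r k := by
    intro n
    have h1 := congrArg norm (hprod n w)
    simp only [norm_mul, norm_prod] at h1
    have h2 : ‖FF f z n w‖ ≤ M := (hinv n).2.1 w hw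
    have h3 : ‖f w‖ * ∏ k ∈ Finset.range n, P k
        ≤ M * ∏ k ∈ Finset.range n, ‖w - z k‖ := by
      rw [hP]
      calc ‖f w‖ * ∏ k ∈ Finset.range n, ‖w + (starRingEnd ℂ) (z k)‖
          = ‖f w‖ * ∏ k ∈ Finset.range n, ‖w + (starRingEnd ℂ) (z k)‖ := by
            rfl
        _ = ‖FF f z n w‖ * ∏ k ∈ Finset.range n, ‖w - z k‖ := h1.symm
        _ ≤ M * ∏ k ∈ Finset.range n, ‖w - z k‖ := by
            apply mul_le_mul_of_nonneg_right _ (Finset.prod_nonneg fun k _ => norm_nonneg _)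
            exact h2
    have h4 : ∀ k, r k * P k = ‖w - z k‖ := fun k =>
      div_mul_cancel₀ _ (hPpos k).ne'
    have h5 : ∏ k ∈ Finset.range n, ‖w - z k‖
        = (∏ k ∈ Finset.range n, r k) * ∏ k ∈ Finset.range n, P k := by
      rw [← Finset.prod_mul_distrib]
      exact Finset.prod_congr rfl fun k _ => (h4 k).symm
    rw [h5] at h3
    have hPprod : 0 < ∏ k ∈ Finset.range n, P k := Finset.prod_pos fun k _ => hPpos k
    have := h3
    rw [← mul_assoc] at this
    exact le_of_mul_le_mul_right this hPprod
  -- sum of t diverges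
  have hc : (0:ℝ) < 4 * w.re * δ ^ 2 / (δ + ‖w‖) ^ 2 := by positivity
  set c : ℝ := 4 * w.re * δ ^ 2 / (δ + ‖w‖) ^ 2 with hcdef
  have htlow : ∀ k, c * (1 / z k).re ≤ t k := by
    intro k
    have hzk : z k ≠ 0 := by
      intro h0
      have := hzre k
      rw [h0] at this
      simp at this
    have hnsq : 0 < Complex.normSq (z k) := Complex.normSq_pos.2 hzk
    have hre : (1 / z k).re = (z k).re / Complex.normSq (z k) := by
      rw [one_div, Complex.inv_re]
    have hPle : P k ≤ ‖z k‖ * ((δ + ‖w‖) / δ) := by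
      rw [hP]
      calc ‖w + (starRingEnd ℂ) (z k)‖
          ≤ ‖w‖ + ‖(starRingEnd ℂ) (z k)‖ := norm_add_le _ _
        _ = ‖w‖ + ‖z k‖ := by rw [Complex.norm_conj]
        _ ≤ ‖z k‖ * (‖w‖ / δ) + ‖z k‖ := by
            have h1 : ‖w‖ = δ * (‖w‖ / δ) := by field_simp [hδ.ne']
            have h2 : δ ≤ ‖z k‖ := hδle k
            nlinarith [norm_nonneg w, norm_nonneg (z k)]
        _ = ‖z k‖ * ((δ + ‖w‖) / δ) := by field_simp [hδ.ne']; ring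
    have hP2le : P k ^ 2 ≤ Complex.normSq (z k) * ((δ + ‖w‖) / δ) ^ 2 := by
      have := mul_self_le_mul_self (hPpos k).le hPle
      rw [← Complex.sq_norm]
      nlinarith [this]
    have hnum : 0 ≤ 4 * w.re * (z k).re := by nlinarith [hzre k, hw]
    have hBpos : 0 < Complex.normSq (z k) * ((δ + ‖w‖) / δ) ^ 2 := by
      apply mul_pos hnsq
      positivity
    have h6 : 4 * w.re * (z k).re / (Complex.normSq (z k) * ((δ + ‖w‖) / δ) ^ 2)
        ≤ t k := by
      rw [ht]
      exact div_le_div_of_nonneg_left hnum (pow_pos (hPpos k) 2) hP2le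
    refine le_trans (le_of_eq ?_) h6
    rw [hre, hcdef]
    field_simp
  have hsumt : Tendsto (fun n => ∑ k ∈ Finset.range n, t k) atTop atTop := by
    have h1 : Tendsto (fun n => c * ∑ k ∈ Finset.range n, (1 / z k).re) atTop atTop :=
      hsum.const_mul_atTop hc
    refine tendsto_atTop_mono ?_ h1
    intro n
    rw [Finset.mul_sum]
    exact Finset.sum_le_sum fun k _ => htlow k
  -- conclude
  have hprod_le : ∀ n, ∏ k ∈ Finset.range n, r k
      ≤ Real.exp (-(∑ k ∈ Finset.range n, t k) / 2) := by
    intro n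
    calc ∏ k ∈ Finset.range n, r k
        ≤ ∏ k ∈ Finset.range n, Real.exp (-(t k) / 2) :=
          Finset.prod_le_prod (fun k _ => hrnn k) (fun k _ => hrle k)
      _ = Real.exp (∑ k ∈ Finset.range n, (-(t k) / 2)) := by rw [Real.exp_sum]
      _ = Real.exp (-(∑ k ∈ Finset.range n, t k) / 2) := by
          congr 1
          rw [← Finset.sum_div, ← Finset.sum_neg_distrib]
  have hfinal : ∀ n, ‖f w‖ ≤ M * Real.exp (-(∑ k ∈ Finset.range n, t k) / 2) := fun n =>
    (hmain n).trans (mul_le_mul_of_nonneg_left (hprod_le n) hM0)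
  have htend : Tendsto (fun n => M * Real.exp (-(∑ k ∈ Finset.range n, t k) / 2))
      atTop (nhds 0) := by
    rw [show (0:ℝ) = M * 0 by ring]
    apply Tendsto.const_mul
    apply Real.tendsto_exp_atBot.comp
    have h1 : Tendsto (fun n => (∑ k ∈ Finset.range n, t k) / 2) atTop atTop :=
      Filter.Tendsto.atTop_div_const (by norm_num) hsumt
    simpa only [neg_div] using tendsto_neg_atBot_iff.2 h1
  have : ‖f w‖ ≤ 0 := ge_of_tendsto htend (Eventually.of_forall hfinal)
  exact norm_le_zero_iff.1 this
end
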